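/- arXiv:2412.09095 — 10 statements merged into one kernel-verified Lean document; each statement's English description precedes it below -/
import Mathlib

section
/- Let q ≥ 0 be an integer, let a < b be real numbers, and let L be the shifted Legendre polynomial of degree q on (a, b). Then ∫_a^b (t − a)·L(t)·L'(t) dt = (b − a)·q/(2q + 1), where L' denotes the derivative of L. -/
open MeasureTheory

/-- If `L` is the shifted Legendre polynomial of degree `q` on `(a, b)`, then
`∫_a^b (t − a) L(t) L'(t) dt = (b − a) q/(2q + 1)`. -/
theorem shifted_legendre_weighted_deriv_integral (q : ℕ) (a b : ℝ) (hab : a < b)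
    (L : Polynomial ℝ) (hdeg : L.natDegree ≤ q)
    (horth : ∀ j : ℕ, j < q → ∫ t in Set.Ioo a b, L.eval t * t ^ j = 0)
    (hb : L.eval b = 1) :
    ∫ t in Set.Ioo a b, (t - a) * L.eval t * (Polynomial.derivative L).eval t
      = (b - a) * (q : ℝ) / (2 * (q : ℝ) + 1) := by
  classical
  open Polynomial in
  -- integrability of polynomial evaluations on the interval
  have hint : ∀ p : ℝ[X], IntegrableOn (fun t => p.eval t) (Set.Ioo a b) volume := fun p =>
    (p.continuous.integrableOn_Icc).mono_set Set.Ioo_subset_Icc_self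
  -- linearity helpers
  have intadd : ∀ p r : ℝ[X], ∫ t in Set.Ioo a b, (p + r).eval t
      = (∫ t in Set.Ioo a b, p.eval t) + ∫ t in Set.Ioo a b, r.eval t := by
    intro p r
    simp only [Polynomial.eval_add]
    exact integral_add (hint p) (hint r)
  have intsub : ∀ p r : ℝ[X], ∫ t in Set.Ioo a b, (p - r).eval t
      = (∫ t in Set.Ioo a b, p.eval t) - ∫ t in Set.Ioo a b, r.eval t := by
    intro p r
    simp only [Polynomial.eval_sub]
    exact integral_sub (hint p) (hint r)
  have intsmul : ∀ (r : ℝ) (p : ℝ[X]), ∫ t in Set.Ioo a b, (Polynomial.C r * p).eval t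
      = r * ∫ t in Set.Ioo a b, p.eval t := by
    intro r p
    simp only [Polynomial.eval_mul, Polynomial.eval_C]
    exact integral_const_mul r _
  -- key orthogonality lemma
  have key : ∀ p : ℝ[X], (∀ j, q ≤ j → p.coeff j = 0) →
      ∫ t in Set.Ioo a b, (L * p).eval t = 0 := by
    intro p hp
    by_cases hp0 : p = 0
    · simp [hp0]
    have hd : p.natDegree < q := by
      by_contra h
      exact (Polynomial.leadingCoeff_ne_zero.mpr hp0) (hp _ (le_of_not_gt h))
    have hrepr := Polynomial.as_sum_range' p q hd
    calc ∫ t in Set.Ioo a b, (L * p).eval t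
        = ∫ t in Set.Ioo a b, ∑ j ∈ Finset.range q, p.coeff j * (L.eval t * t ^ j) := by
          apply integral_congr_ae; filter_upwards with t
          conv_lhs => rw [hrepr]
          rw [Polynomial.eval_mul, Polynomial.eval_finset_sum, Finset.mul_sum]
          apply Finset.sum_congr rfl; intro j _; simp; ring
      _ = ∑ j ∈ Finset.range q, ∫ t in Set.Ioo a b, p.coeff j * (L.eval t * t ^ j) := by
          apply integral_finset_sum
          intro j _
          exact ((hint (Polynomial.C (p.coeff j) * (L * Polynomial.X ^ j))).congr_fun
            (fun t _ => by
              simp only [Polynomial.eval_mul, Polynomial.eval_C, Polynomial.eval_pow,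
                Polynomial.eval_X]) measurableSet_Ioo)
      _ = 0 := by
          apply Finset.sum_eq_zero; intro j hj
          rw [integral_const_mul, horth j (Finset.mem_range.mp hj), mul_zero]
  -- integrals agree when high coefficients agree
  have main : ∀ p₁ p₂ : ℝ[X], (∀ j, q ≤ j → p₁.coeff j = p₂.coeff j) →
      ∫ t in Set.Ioo a b, (L * p₁).eval t = ∫ t in Set.Ioo a b, (L * p₂).eval t := by
    intro p₁ p₂ h
    have := key (p₁ - p₂) (fun j hj => by simp [Polynomial.coeff_sub, h j hj])
    rw [mul_sub, intsub] at this
    linarith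
  set c : ℝ := L.coeff q with hc
  have hcoeff : ∀ j, q < j → L.coeff j = 0 := fun j hj =>
    Polynomial.coeff_eq_zero_of_natDegree_lt (lt_of_le_of_lt hdeg hj)
  set A : ℝ := ∫ t in Set.Ioo a b, (L * (Polynomial.C c * Polynomial.X ^ q)).eval t with hA
  set J : ℝ := ∫ t in Set.Ioo a b, (L * L).eval t with hJ
  -- (1) J = A
  have h1 : J = A := by
    apply main
    intro j hj
    rw [Polynomial.coeff_C_mul, Polynomial.coeff_X_pow]
    rcases eq_or_lt_of_le hj with h | h
    · rw [if_pos h.symm, ← h, mul_one]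
    · rw [if_neg (Ne.symm (ne_of_lt h)), hcoeff j h, mul_zero]
  -- (2) ∫ L * (X * L') = q * A
  have h2 : ∫ t in Set.Ioo a b, (L * (Polynomial.X * Polynomial.derivative L)).eval t
      = (q : ℝ) * A := by
    have e1 : ∫ t in Set.Ioo a b, (L * (Polynomial.X * Polynomial.derivative L)).eval t
        = ∫ t in Set.Ioo a b, (L * (Polynomial.C ((q : ℝ) * c) * Polynomial.X ^ q)).eval t := by
      apply main
      intro j hj
      rw [Polynomial.coeff_C_mul, Polynomial.coeff_X_pow]
      rcases Nat.eq_zero_or_pos j with rfl | hjpos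
      · have hq0 : q = 0 := Nat.le_zero.mp hj
        subst hq0
        rw [if_pos rfl]
        simp
      · obtain ⟨k, rfl⟩ := Nat.exists_eq_succ_of_ne_zero (Nat.pos_iff_ne_zero.mp hjpos)
        rw [Polynomial.coeff_X_mul, Polynomial.coeff_derivative]
        rcases eq_or_lt_of_le hj with h | h
        · subst h
          rw [if_pos rfl, hc]
          push_cast
          ring
        · rw [if_neg (Ne.symm (ne_of_lt h)), hcoeff _ h, mul_zero, zero_mul]
    rw [e1]
    have e2 : Polynomial.C ((q : ℝ) * c) * Polynomial.X ^ q
        = Polynomial.C (q : ℝ) * (Polynomial.C c * Polynomial.X ^ q) := by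
      rw [← mul_assoc, ← Polynomial.C_mul]
    rw [e2, show L * (Polynomial.C (q : ℝ) * (Polynomial.C c * Polynomial.X ^ q))
      = Polynomial.C (q : ℝ) * (L * (Polynomial.C c * Polynomial.X ^ q)) by ring, intsmul]
  -- (3) ∫ L * L' = 0
  have h3 : ∫ t in Set.Ioo a b, (L * Polynomial.derivative L).eval t = 0 := by
    apply key
    intro j hj
    rw [Polynomial.coeff_derivative, hcoeff (j + 1) (Nat.lt_succ_of_le hj), zero_mul]
  -- goal integral as polynomial eval
  set I : ℝ := ∫ t in Set.Ioo a b, (t - a) * L.eval t * (Polynomial.derivative L).eval t with hI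
  have hIeq : I = ∫ t in Set.Ioo a b, (L * (Polynomial.X * Polynomial.derivative L)
      - Polynomial.C a * (L * Polynomial.derivative L)).eval t := by
    rw [hI]; apply integral_congr_ae; filter_upwards with t; simp; ring
  have hIeq2 : I = (∫ t in Set.Ioo a b, (L * (Polynomial.X * Polynomial.derivative L)).eval t)
      - a * ∫ t in Set.Ioo a b, (L * Polynomial.derivative L).eval t := by
    rw [hIeq, intsub, intsmul]
  have hIq : I = (q : ℝ) * J := by rw [hIeq2, h2, h3, h1]; ring
  -- FTC
  have hftc : ∫ t in Set.Ioo a b,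
      (Polynomial.derivative ((Polynomial.X - Polynomial.C a) * L ^ 2)).eval t = b - a := by
    have heq : ∫ t in Set.Ioo a b,
        (Polynomial.derivative ((Polynomial.X - Polynomial.C a) * L ^ 2)).eval t
        = ∫ t in a..b,
        (Polynomial.derivative ((Polynomial.X - Polynomial.C a) * L ^ 2)).eval t := by
      rw [intervalIntegral.integral_of_le hab.le, integral_Ioc_eq_integral_Ioo]
    rw [heq]
    have hder : ∀ x ∈ Set.uIcc a b, HasDerivAt
        (fun t => ((Polynomial.X - Polynomial.C a) * L ^ 2).eval t)
        ((Polynomial.derivative ((Polynomial.X - Polynomial.C a) * L ^ 2)).eval x) x :=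
      fun x _ => Polynomial.hasDerivAt _ x
    rw [intervalIntegral.integral_eq_sub_of_hasDerivAt hder
      ((Polynomial.continuous _).intervalIntegrable a b)]
    simp [hb]
  have hD : Polynomial.derivative ((Polynomial.X - Polynomial.C a) * L ^ 2)
      = L * L + Polynomial.C 2 * (L * (Polynomial.X * Polynomial.derivative L)
        - Polynomial.C a * (L * Polynomial.derivative L)) := by
    simp [Polynomial.derivative_mul, Polynomial.derivative_pow]
    ring
  have hsum : b - a = J + 2 * I := by
    rw [← hftc, hD, intadd, intsmul, ← hJ, ← hIeq]
  -- conclude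
  have hq1 : (2 * (q : ℝ) + 1) ≠ 0 := by positivity
  field_simp
  nlinarith [hsum, hIq]
end

section
/- Let q ≥ 1 be an integer, let a < b be real numbers, and let L be the shifted Legendre polynomial of degree q on (a, b). Let H be a real inner product space, let v be an H-valued polynomial of degree at most q, and let g be an L²(a, b)-orthogonal projection of v onto H-valued polynomials of degree at most q − 1. Then for every real t, v(t) − g(t) = ((2q + 1)/(b − a)) · L(t) · ∫_a^b L(s) v(s) ds, where the integral is a Bochner integral in H. -/
open Polynomial intervalIntegral MeasureTheory

lemma beta_int (a b : ℝ) (m n : ℕ) :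
    ∫ t in a..b, (t - a) ^ m * (b - t) ^ n
      = ((m.factorial : ℝ) * n.factorial / (m + n + 1).factorial) * (b - a) ^ (m + n + 1) := by
  induction n generalizing m with
  | zero =>
    simp only [pow_zero, mul_one, Nat.factorial_zero]
    rw [intervalIntegral.integral_comp_sub_right (fun t => t ^ m) a]
    rw [integral_pow, sub_self]
    have e : (m+0+1).factorial = (m+1)*m.factorial := by simp [Nat.factorial_succ]
    have hm : (m : ℝ) + 1 ≠ 0 := by positivity
    have hf : (m.factorial : ℝ) ≠ 0 := by positivity
    rw [e, zero_pow m.succ_ne_zero]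
    push_cast
    field_simp
    ring
  | succ n ih =>
    have key : ∫ t in a..b, ((m+1 : ℝ) * ((t - a) ^ m * (b - t) ^ (n+1))
        - (n+1 : ℝ) * ((t - a) ^ (m+1) * (b - t) ^ n)) = 0 := by
      have : ∀ t : ℝ, HasDerivAt (fun t => (t - a) ^ (m+1) * (b - t) ^ (n+1))
          ((m+1 : ℝ) * ((t - a) ^ m * (b - t) ^ (n+1))
            - (n+1 : ℝ) * ((t - a) ^ (m+1) * (b - t) ^ n)) t := by
        intro t
        have h1 : HasDerivAt (fun t : ℝ => (t - a) ^ (m+1)) ((m+1 : ℝ) * (t - a) ^ m) t := by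
          simpa using ((hasDerivAt_id t).sub_const a).fun_pow (m+1)
        have h2 : HasDerivAt (fun t : ℝ => (b - t) ^ (n+1)) (-((n+1 : ℝ) * (b - t) ^ n)) t := by
          have := ((hasDerivAt_id t).const_sub b).fun_pow (n+1)
          simpa using this
        have := h1.fun_mul h2
        refine this.congr_deriv ?_
        ring
      rw [intervalIntegral.integral_eq_sub_of_hasDerivAt (fun t _ => this t)
        (by apply Continuous.intervalIntegrable; continuity)]
      simp
    rw [intervalIntegral.integral_sub (by apply Continuous.intervalIntegrable; continuity)
      (by apply Continuous.intervalIntegrable; continuity),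
      intervalIntegral.integral_const_mul, intervalIntegral.integral_const_mul] at key
    have hm : (m + 1 : ℝ) ≠ 0 := by positivity
    have := ih (m + 1)
    have goal : ∫ t in a..b, (t - a) ^ m * (b - t) ^ (n+1)
        = (n+1 : ℝ) / (m+1 : ℝ) * (((m+1).factorial : ℝ) * n.factorial / ((m+1) + n + 1).factorial * (b - a) ^ ((m+1) + n + 1)) := by
      rw [← this]
      field_simp at key ⊢
      linarith [key]
    rw [goal]
    have e1 : (m + 1) + n + 1 = m + (n + 1) + 1 := by ring
    rw [e1]
    rw [Nat.factorial_succ m, Nat.factorial_succ n]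
    push_cast
    field_simp

lemma poly_ftc (p : ℝ[X]) (a b : ℝ) :
    ∫ t in a..b, (derivative p).eval t = p.eval b - p.eval a := by
  apply intervalIntegral.integral_deriv_eq_sub' (fun x => p.eval x)
  · exact funext fun x => p.deriv
  · exact fun x _ => p.differentiableAt
  · exact (derivative p).continuous.continuousOn

lemma poly_ibp (p r : ℝ[X]) (a b : ℝ) :
    ∫ t in a..b, (derivative p).eval t * r.eval t
      = p.eval b * r.eval b - p.eval a * r.eval a
        - ∫ t in a..b, p.eval t * (derivative r).eval t := by
  have h := poly_ftc (p * r) a b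
  rw [derivative_mul] at h
  simp only [eval_add, eval_mul] at h
  rw [intervalIntegral.integral_add
    (((derivative p).continuous.fun_mul r.continuous).intervalIntegrable _ _)
    ((p.continuous.fun_mul (derivative r).continuous).intervalIntegrable _ _)] at h
  linarith

lemma dvd_iter_deriv (c : ℝ) (m k : ℕ) (f : ℝ[X]) (h : (X - C c) ^ m ∣ f) :
    (X - C c) ^ (m - k) ∣ derivative^[k] f := by
  induction k with
  | zero => simpa using h
  | succ k ih =>
    obtain ⟨g, hg⟩ := ih
    rw [Function.iterate_succ_apply', hg]
    rcases Nat.eq_zero_or_pos (m - k) with h0 | h0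
    · have : m - (k+1) = 0 := by omega
      simp [this]
    · obtain ⟨j, hj⟩ : ∃ j, m - k = j + 1 := ⟨m - k - 1, by omega⟩
      have hj2 : m - (k+1) = j := by omega
      rw [hj, hj2, derivative_mul, derivative_pow, derivative_X_sub_C]
      refine dvd_add ⟨C ((j:ℝ)+1) * g, ?_⟩ ⟨(X - C c) * derivative g, by ring⟩
      have e : j + 1 - 1 = j := by omega
      rw [e]
      push_cast
      ring

lemma eval_zero_of_dvd (c : ℝ) (j : ℕ) (hj : 1 ≤ j) (h : (X - C c) ^ j ∣ f) :
    f.eval c = 0 := by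
  obtain ⟨g, hg⟩ := h
  rw [hg]
  simp [eval_pow, zero_pow (by omega : j ≠ 0)]

section Rodrigues
variable (q : ℕ) (a b : ℝ)

noncomputable def Pq : ℝ[X] := ((X - C a) * (X - C b)) ^ q

lemma Pq_eval (t : ℝ) : (Pq q a b).eval t = ((t - a) * (t - b)) ^ q := by
  simp [Pq]

lemma Pq_dvd_a : (X - C a) ^ q ∣ Pq q a b := by
  rw [Pq, mul_pow]; exact Dvd.intro _ rfl

lemma Pq_dvd_b : (X - C b) ^ q ∣ Pq q a b := by
  rw [Pq, mul_pow]; exact Dvd.intro_left _ rfl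

lemma Pq_boundary_a {i : ℕ} (hi : i < q) : (derivative^[i] (Pq q a b)).eval a = 0 := by
  refine eval_zero_of_dvd a (q - i) (by omega) ?_
  exact dvd_iter_deriv a q i _ (Pq_dvd_a q a b)

lemma Pq_boundary_b {i : ℕ} (hi : i < q) : (derivative^[i] (Pq q a b)).eval b = 0 := by
  refine eval_zero_of_dvd b (q - i) (by omega) ?_
  exact dvd_iter_deriv b q i _ (Pq_dvd_b q a b)

lemma Pq_ibp_iter : ∀ k, k ≤ q → ∀ r : ℝ[X],
    ∫ t in a..b, (derivative^[q] (Pq q a b)).eval t * r.eval t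
      = (-1 : ℝ) ^ k * ∫ t in a..b,
          (derivative^[q - k] (Pq q a b)).eval t * (derivative^[k] r).eval t := by
  intro k
  induction k with
  | zero => intro _ r; simp
  | succ k ih =>
    intro hk r
    rw [ih (by omega) r]
    have e1 : q - k = (q - (k+1)) + 1 := by omega
    have e2 : derivative^[q - k] (Pq q a b)
        = derivative (derivative^[q - (k+1)] (Pq q a b)) := by
      rw [e1, Function.iterate_succ_apply']
    rw [e2, poly_ibp]
    rw [Pq_boundary_a q a b (by omega : q - (k+1) < q),
        Pq_boundary_b q a b (by omega : q - (k+1) < q)]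
    rw [← Function.iterate_succ_apply' derivative k r]
    ring

lemma Nq_orth {j : ℕ} (hj : j < q) :
    ∫ t in a..b, (derivative^[q] (Pq q a b)).eval t * t ^ j = 0 := by
  have h := Pq_ibp_iter q a b q le_rfl (X ^ j)
  rw [show derivative^[q] (X ^ j : ℝ[X]) = 0 from
    Polynomial.iterate_derivative_eq_zero (by simpa [natDegree_X_pow] using hj)] at h
  simpa using h

lemma Pq_natDegree (hab : a ≠ b) : (Pq q a b).natDegree = 2 * q := by
  rw [Pq, natDegree_pow, natDegree_mul (X_sub_C_ne_zero a) (X_sub_C_ne_zero b)]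
  simp [natDegree_X_sub_C]; ring

lemma Pq_monic : (Pq q a b).Monic := ((monic_X_sub_C a).mul (monic_X_sub_C b)).pow q

lemma Nq_natDegree_le (hab : a ≠ b) : (derivative^[q] (Pq q a b)).natDegree ≤ q := by
  have := Polynomial.natDegree_iterate_derivative (Pq q a b) q
  rw [Pq_natDegree q a b hab] at this
  omega

lemma Nq_coeff (hab : a ≠ b) :
    (derivative^[q] (Pq q a b)).coeff q = ((2 * q).descFactorial q : ℝ) := by
  rw [Polynomial.coeff_iterate_derivative]
  have e : q + q = 2 * q := by ring
  rw [e]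
  have : (Pq q a b).coeff (2 * q) = 1 := by
    have := Pq_monic q a b
    rw [Monic, leadingCoeff, Pq_natDegree q a b hab] at this
    exact this
  rw [this]
  simp

lemma Nq_eval_b :
    (derivative^[q] (Pq q a b)).eval b = (q.factorial : ℝ) * (b - a) ^ q := by
  rw [Pq, mul_pow, Polynomial.iterate_derivative_mul]
  rw [eval_finset_sum]
  rw [Finset.sum_eq_single q]
  · simp only [Nat.choose_self, one_smul, Nat.sub_self, Function.iterate_zero, id_eq]
    rw [Polynomial.iterate_derivative_X_sub_pow_self]
    simp [eval_pow]
    ring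
  · intro k hk hne
    have hk' : k < q := by
      simp only [Finset.mem_range] at hk; omega
    have hz : ((derivative^[k] ((X - C b : ℝ[X])^q)).eval b) = 0 := by
      rw [Polynomial.iterate_derivative_X_sub_pow]
      simp [zero_pow (by omega : q - k ≠ 0)]
    simp [hz]
  · intro h
    exact absurd (Finset.self_mem_range_succ q) h

lemma Nq_sq (hab : a < b) :
    ∫ t in a..b, ((derivative^[q] (Pq q a b)).eval t) ^ 2
      = ((2*q).factorial : ℝ) * (q.factorial : ℝ)^2 / ((2*q+1).factorial : ℝ)
          * (b - a) ^ (2*q+1) := by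
  have h := Pq_ibp_iter q a b q le_rfl (derivative^[q] (Pq q a b))
  rw [← Function.iterate_add_apply] at h
  have e : q + q = 2 * q := by ring
  rw [e, Nat.sub_self, Function.iterate_zero, id_eq] at h
  have hconst : derivative^[2*q] (Pq q a b) = C (((2*q).factorial : ℝ)) := by
    have hdeg : (derivative^[2*q] (Pq q a b)).natDegree = 0 := by
      have := Polynomial.natDegree_iterate_derivative (Pq q a b) (2*q)
      rw [Pq_natDegree q a b hab.ne] at this
      omega
    rw [Polynomial.eq_C_of_natDegree_le_zero hdeg.le]
    congr 1
    rw [Polynomial.coeff_iterate_derivative]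
    have : (Pq q a b).coeff (0 + 2*q) = 1 := by
      have hm := Pq_monic q a b
      rw [Monic, leadingCoeff, Pq_natDegree q a b hab.ne] at hm
      simpa using hm
    rw [this]
    simp [Nat.descFactorial_self]
  rw [hconst] at h
  simp only [eval_C] at h
  have h2 : ∫ t in a..b, ((derivative^[q] (Pq q a b)).eval t) ^ 2
      = (-1:ℝ)^q * ∫ t in a..b, (Pq q a b).eval t * ((2*q).factorial : ℝ) := by
    rw [← h]; congr 1; ext t; ring
  rw [h2]
  have h3 : ∫ t in a..b, (Pq q a b).eval t * ((2*q).factorial : ℝ)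
      = ((2*q).factorial : ℝ) * ∫ t in a..b, (Pq q a b).eval t := by
    rw [← intervalIntegral.integral_const_mul]
    congr 1; ext t; ring
  rw [h3]
  have h4 : ∫ t in a..b, (Pq q a b).eval t
      = (-1:ℝ)^q * ∫ t in a..b, (t - a)^q * (b - t)^q := by
    rw [← intervalIntegral.integral_const_mul]
    congr 1; ext t
    rw [Pq_eval]
    rw [mul_pow]
    have : (t - b)^q = (-1:ℝ)^q * (b - t)^q := by
      rw [← neg_sub b t, neg_pow]
    rw [this]; ring
  rw [h4, beta_int]
  have e2 : q + q + 1 = 2*q + 1 := by ring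
  rw [e2]
  have hsq : (-1:ℝ)^q * (-1:ℝ)^q = 1 := by
    rw [← pow_add]; exact Even.neg_one_pow ⟨q, by ring⟩
  have key : ∀ x : ℝ, (-1:ℝ)^q * (((2*q).factorial : ℝ) * ((-1:ℝ)^q * x))
      = ((-1:ℝ)^q * (-1:ℝ)^q) * (((2*q).factorial : ℝ) * x) := fun x => by ring
  rw [key, hsq, one_mul]
  ring

end Rodrigues

lemma orth_pair (q : ℕ) (a b : ℝ) (f g : ℝ[X]) (hg : g.natDegree ≤ q)
    (hf : ∀ j, j < q → ∫ t in a..b, f.eval t * t ^ j = 0) :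
    ∫ t in a..b, f.eval t * g.eval t = g.coeff q * ∫ t in a..b, f.eval t * t ^ q := by
  have hrep : ∀ t : ℝ, f.eval t * g.eval t
      = ∑ i ∈ Finset.range (q+1), g.coeff i * (f.eval t * t ^ i) := by
    intro t
    rw [eval_eq_sum_range' (Nat.lt_succ_of_le hg) t, Finset.mul_sum]
    refine Finset.sum_congr rfl fun i _ => by ring
  calc ∫ t in a..b, f.eval t * g.eval t
      = ∫ t in a..b, ∑ i ∈ Finset.range (q+1), g.coeff i * (f.eval t * t ^ i) := by
        simp_rw [hrep]
    _ = ∑ i ∈ Finset.range (q+1), ∫ t in a..b, g.coeff i * (f.eval t * t ^ i) := by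
        apply intervalIntegral.integral_finset_sum
        intro i _
        exact ((continuous_const.mul (f.continuous.mul (continuous_pow i))).intervalIntegrable _ _)
    _ = ∑ i ∈ Finset.range (q+1), g.coeff i * ∫ t in a..b, f.eval t * t ^ i := by
        simp_rw [intervalIntegral.integral_const_mul]
    _ = g.coeff q * ∫ t in a..b, f.eval t * t ^ q := by
        rw [Finset.sum_eq_single q]
        · intro i hi hne
          rw [hf i (by simp at hi; omega), mul_zero]
        · intro h; exact absurd (Finset.self_mem_range_succ q) h

lemma vanish_of_sq_integral_zero (a b : ℝ) (hab : a < b) (p : ℝ[X])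
    (h : ∫ t in a..b, (p.eval t) ^ 2 = 0) : p = 0 := by
  have hroots : Set.Ioo a b ⊆ {x | p.IsRoot x} := by
    intro c hc
    by_contra hne
    have hpos : 0 < ∫ t in a..b, (p.eval t) ^ 2 := by
      apply intervalIntegral.integral_pos hab
      · exact ((p.continuous.pow 2).continuousOn)
      · intro x _; positivity
      · exact ⟨c, Set.mem_Icc_of_Ioo hc, by
          have : p.eval c ≠ 0 := hne
          positivity⟩
    linarith [h, hpos]
  exact Polynomial.eq_zero_of_infinite_isRoot p
    (((Set.Ioo_infinite hab)).mono hroots)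

lemma rigidity_gen (q : ℕ) (a b : ℝ) (hab : a < b) (N : ℝ[X]) (hNdeg : N.natDegree ≤ q)
    (hNorth : ∀ j, j < q → ∫ s in a..b, N.eval s * s ^ j = 0) (hNc : N.coeff q ≠ 0)
    (p : ℝ[X]) (hdeg : p.natDegree ≤ q)
    (horth : ∀ j, j < q → ∫ s in a..b, p.eval s * s ^ j = 0) :
    p = C (p.coeff q / N.coeff q) * N := by
  set μ := p.coeff q / N.coeff q with hμ
  set A := ∫ s in a..b, p.eval s * s ^ q with hA
  set B := ∫ s in a..b, N.eval s * s ^ q with hB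
  have hpN : ∫ s in a..b, p.eval s * N.eval s = N.coeff q * A :=
    orth_pair q a b p N hNdeg horth
  have hNp : ∫ s in a..b, N.eval s * p.eval s = p.coeff q * B :=
    orth_pair q a b N p hdeg hNorth
  have hpp : ∫ s in a..b, p.eval s * p.eval s = p.coeff q * A :=
    orth_pair q a b p p hdeg horth
  have hNN : ∫ s in a..b, N.eval s * N.eval s = N.coeff q * B :=
    orth_pair q a b N N hNdeg hNorth
  have hcomm : N.coeff q * A = p.coeff q * B := by
    rw [← hpN, ← hNp]
    congr 1; ext s; ring
  have hzero : ∫ s in a..b, (p.eval s - μ * N.eval s) ^ 2 = 0 := by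
    have expand : ∀ s : ℝ, (p.eval s - μ * N.eval s) ^ 2
        = (p.eval s * p.eval s - 2*μ*(p.eval s * N.eval s)) + μ^2 * (N.eval s * N.eval s) :=
      fun s => by ring
    simp_rw [expand]
    rw [intervalIntegral.integral_add (by
        apply IntervalIntegrable.sub
        · exact ((p.continuous.fun_mul p.continuous).intervalIntegrable _ _)
        · exact ((continuous_const.fun_mul (p.continuous.fun_mul N.continuous)).intervalIntegrable _ _))
      ((continuous_const.fun_mul (N.continuous.fun_mul N.continuous)).intervalIntegrable _ _),
      intervalIntegral.integral_sub ((p.continuous.fun_mul p.continuous).intervalIntegrable _ _)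
        ((continuous_const.fun_mul (p.continuous.fun_mul N.continuous)).intervalIntegrable _ _),
      intervalIntegral.integral_const_mul, intervalIntegral.integral_const_mul,
      hpp, hpN, hNN, hμ]
    field_simp
    linear_combination (-(p.coeff q)) * hcomm
  have hpoly : p - C μ * N = 0 := by
    apply vanish_of_sq_integral_zero a b hab
    simpa using hzero
  have := sub_eq_zero.mp hpoly
  exact this


section Main
open Polynomial intervalIntegral MeasureTheory



open MeasureTheory

/-- An `H`-valued polynomial of degree at most `k`: a function of the form
`t ↦ ∑_{i=0}^{k} t^i • cᵢ` with coefficients `cᵢ ∈ H`. -/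
def IsPolyDeg {H : Type*} [NormedAddCommGroup H] [InnerProductSpace ℝ H]
    (k : ℕ) (v : ℝ → H) : Prop :=
  ∃ c : ℕ → H, ∀ t : ℝ, v t = ∑ i ∈ Finset.range (k + 1), t ^ i • c i

/-- `g` is an `L²(a, b)`-orthogonal projection of `f` onto `H`-valued polynomials of
degree at most `k`. -/
def IsL2ProjOn {H : Type*} [NormedAddCommGroup H] [InnerProductSpace ℝ H]
    (a b : ℝ) (k : ℕ) (f g : ℝ → H) : Prop :=
  IsPolyDeg k g ∧
    ∀ r : ℝ → H, IsPolyDeg k r →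
      ∫ t in Set.Ioo a b, (inner ℝ (f t - g t) (r t) : ℝ) = 0

/-- If `L` is the shifted Legendre polynomial of degree `q ≥ 1` on `(a, b)`, `v` is an
`H`-valued polynomial of degree at most `q`, and `g` is an `L²(a,b)`-orthogonal projection of
`v` onto `H`-valued polynomials of degree at most `q − 1`, then
`v(t) − g(t) = ((2q+1)/(b−a)) L(t) ∫_a^b L(s) v(s) ds` for every real `t`. -/
theorem projection_error_formula {H : Type*} [NormedAddCommGroup H]
    [InnerProductSpace ℝ H] [CompleteSpace H]
    (q : ℕ) (hq : 1 ≤ q) (a b : ℝ) (hab : a < b)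
    (L : Polynomial ℝ) (hLdeg : L.natDegree ≤ q)
    (hLorth : ∀ j : ℕ, j < q → ∫ t in Set.Ioo a b, L.eval t * t ^ j = 0)
    (hLb : L.eval b = 1)
    (v g : ℝ → H) (hv : IsPolyDeg q v) (hg : IsL2ProjOn a b (q - 1) v g) :
    ∀ t : ℝ, v t - g t =
      ((2 * (q : ℝ) + 1) / (b - a)) •
        (L.eval t • ∫ s in Set.Ioo a b, L.eval s • v s) := by
  have hba : (0:ℝ) < b - a := by linarith
  have hbane : (b - a : ℝ) ≠ 0 := ne_of_gt hba
  have h2q1 : (2*(q:ℝ)+1) ≠ 0 := by positivity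
  -- conversion between Ioo integrals and interval integrals
  have convI : ∀ f : ℝ → ℝ, (∫ s in Set.Ioo a b, f s) = ∫ s in a..b, f s := fun f => by
    rw [intervalIntegral.integral_of_le hab.le, MeasureTheory.integral_Ioc_eq_integral_Ioo]
  -- the Rodrigues polynomial
  set N := derivative^[q] (Pq q a b) with hNdef
  have hNdeg : N.natDegree ≤ q := Nq_natDegree_le q a b hab.ne
  have hNorth : ∀ j, j < q → ∫ s in a..b, N.eval s * s ^ j = 0 :=
    fun j hj => Nq_orth q a b hj
  have hNc : N.coeff q ≠ 0 := by
    rw [hNdef, Nq_coeff q a b hab.ne]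
    exact Nat.cast_ne_zero.mpr
      (fun h => by have := Nat.descFactorial_eq_zero_iff_lt.mp h; omega)
  have hLorth' : ∀ j, j < q → ∫ s in a..b, L.eval s * s ^ j = 0 := fun j hj => by
    rw [← convI _]; exact hLorth j hj
  have hLrig : L = C (L.coeff q / N.coeff q) * N :=
    rigidity_gen q a b hab N hNdeg hNorth hNc L hLdeg hLorth'
  have hNb : N.eval b = (q.factorial : ℝ) * (b-a)^q := Nq_eval_b q a b
  have hNbne : N.eval b ≠ 0 := by
    rw [hNb]
    have hf : (0:ℝ) < (q.factorial : ℝ) := by exact_mod_cast q.factorial_pos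
    positivity
  have hLNb : (L.coeff q / N.coeff q) * N.eval b = 1 := by
    have h1 : L.eval b = (L.coeff q / N.coeff q) * N.eval b := by
      conv_lhs => rw [hLrig]
      simp [eval_mul]
    rw [← h1, hLb]
  -- key scalar rigidity fact
  have main_scalar : ∀ p : ℝ[X], p.natDegree ≤ q →
      (∀ j, j < q → ∫ s in a..b, p.eval s * s ^ j = 0) →
      ∀ x : ℝ, p.eval x = p.eval b * L.eval x := by
    intro p hdeg horth x
    have hp := rigidity_gen q a b hab N hNdeg hNorth hNc p hdeg horth
    have e1 : p.eval x = (p.coeff q / N.coeff q) * N.eval x := by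
      conv_lhs => rw [hp]
      simp [eval_mul]
    have e2 : p.eval b = (p.coeff q / N.coeff q) * N.eval b := by
      conv_lhs => rw [hp]
      simp [eval_mul]
    have e3 : L.eval x = (L.coeff q / N.coeff q) * N.eval x := by
      conv_lhs => rw [hLrig]
      simp [eval_mul]
    rw [e1, e2, e3]
    calc (p.coeff q / N.coeff q) * N.eval x
        = ((p.coeff q / N.coeff q) * N.eval x) * ((L.coeff q / N.coeff q) * N.eval b) := by
          rw [hLNb, mul_one]
      _ = (p.coeff q / N.coeff q) * N.eval b * ((L.coeff q / N.coeff q) * N.eval x) := by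
          ring
  -- the L² norm of L
  have hμval : L.coeff q / N.coeff q = (N.eval b)⁻¹ := by
    field_simp at hLNb ⊢
    linarith [hLNb]
  have hL2 : ∫ s in a..b, (L.eval s)^2 = (b-a)/(2*(q:ℝ)+1) := by
    have hrw : ∀ s : ℝ, (L.eval s)^2 = (L.coeff q / N.coeff q)^2 * (N.eval s)^2 := fun s => by
      conv_lhs => rw [hLrig]
      rw [eval_mul, eval_C]
      ring
    simp_rw [hrw]
    rw [intervalIntegral.integral_const_mul, Nq_sq q a b hab, hμval, hNb]
    have hfact : ((2*q+1).factorial : ℝ) = (2*(q:ℝ)+1) * ((2*q).factorial : ℝ) := by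
      rw [Nat.factorial_succ]; push_cast; ring
    have hpow : (b-a)^(2*q+1) = ((b-a)^q)^2 * (b-a) := by
      have e : 2*q+1 = q+q+1 := by ring
      rw [e, pow_add, pow_add, pow_one]; ring
    rw [hfact, hpow]
    have hf : (0:ℝ) < (q.factorial : ℝ) := by exact_mod_cast q.factorial_pos
    have hf2 : (0:ℝ) < ((2*q).factorial : ℝ) := by exact_mod_cast (2*q).factorial_pos
    field_simp
  -- unpack the polynomial structure of v and g
  obtain ⟨cv, hcv⟩ := hv
  obtain ⟨⟨cg, hcg0⟩, horthHG⟩ := hg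
  have hq1 : q - 1 + 1 = q := by omega
  rw [hq1] at hcg0
  -- coefficients of w = v - g
  set c : ℕ → H := fun i => cv i - (if i < q then cg i else 0) with hc
  have hw : ∀ s : ℝ, v s - g s = ∑ i ∈ Finset.range (q+1), s ^ i • c i := by
    intro s
    have h2 : ∑ i ∈ Finset.range (q+1), s ^ i • (if i < q then cg i else (0:H))
        = ∑ i ∈ Finset.range q, s ^ i • cg i := by
      rw [Finset.sum_range_succ, if_neg (lt_irrefl q), smul_zero, add_zero]
      exact Finset.sum_congr rfl fun i hi => by rw [if_pos (Finset.mem_range.mp hi)]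
    rw [hcv, hcg0, ← h2, ← Finset.sum_sub_distrib]
    exact Finset.sum_congr rfl fun i _ => by rw [hc, smul_sub]
  -- rigidity for each component
  have hcomp : ∀ (u : H) (x : ℝ),
      (inner ℝ (v x - g x) u : ℝ) = (inner ℝ (v b - g b) u : ℝ) * L.eval x := by
    intro u x
    set pu : ℝ[X] := ∑ i ∈ Finset.range (q+1), C (inner ℝ (c i) u : ℝ) * X ^ i with hpu
    have hpueval : ∀ s : ℝ, pu.eval s = (inner ℝ (v s - g s) u : ℝ) := by
      intro s
      rw [hw s, sum_inner, hpu, eval_finset_sum]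
      refine Finset.sum_congr rfl fun i _ => ?_
      rw [real_inner_smul_left, eval_mul, eval_C, eval_pow, eval_X, mul_comm]
    have hpudeg : pu.natDegree ≤ q := by
      refine Polynomial.natDegree_sum_le_of_forall_le _ _ fun i hi => ?_
      refine (Polynomial.natDegree_C_mul_le _ _).trans ?_
      rw [natDegree_X_pow]
      exact Nat.lt_succ_iff.mp (Finset.mem_range.mp hi)
    have hpuorth : ∀ j, j < q → ∫ s in a..b, pu.eval s * s ^ j = 0 := by
      intro j hj
      have hr : IsPolyDeg (q-1) (fun s : ℝ => s ^ j • u) := by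
        refine ⟨fun i => if i = j then u else 0, fun s => ?_⟩
        rw [hq1, Finset.sum_eq_single j]
        · simp
        · intro i _ hne; simp [hne]
        · intro h; exact absurd (Finset.mem_range.mpr hj) h
      have h0 := horthHG _ hr
      rw [← convI _]
      have : (fun s : ℝ => pu.eval s * s ^ j)
          = fun s : ℝ => (inner ℝ (v s - g s) (s ^ j • u) : ℝ) := by
        funext s
        rw [real_inner_smul_right, hpueval s]
        ring
      rw [this]
      exact h0
    have := main_scalar pu hpudeg hpuorth x
    rw [hpueval x, hpueval b] at this
    exact this
  -- w(x) = L(x) • w(b)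
  have hwL : ∀ x : ℝ, v x - g x = L.eval x • (v b - g b) := by
    intro x
    apply ext_inner_right ℝ
    intro u
    rw [hcomp u x, real_inner_smul_left]
    ring
  -- compute the integral
  have hgcont : Continuous g := by
    have : g = fun s => ∑ i ∈ Finset.range q, s ^ i • cg i := funext hcg0
    rw [this]
    exact continuous_finset_sum _ fun i _ => (continuous_pow i).smul continuous_const
  have hvcont : Continuous v := by
    have : v = fun s => ∑ i ∈ Finset.range (q+1), s ^ i • cv i := funext hcv
    rw [this]
    exact continuous_finset_sum _ fun i _ => (continuous_pow i).smul continuous_const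
  have intgOn : ∀ {f : ℝ → H}, Continuous f → IntegrableOn f (Set.Ioo a b) volume :=
    fun hf => (hf.integrableOn_Icc).mono_set Set.Ioo_subset_Icc_self
  have hsplit : (∫ s in Set.Ioo a b, L.eval s • v s)
      = (∫ s in Set.Ioo a b, ((L.eval s)^2) • (v b - g b))
        + ∫ s in Set.Ioo a b, L.eval s • g s := by
    rw [← MeasureTheory.integral_add
      (intgOn ((L.continuous.fun_pow 2).fun_smul continuous_const))
      (intgOn (L.continuous.fun_smul hgcont))]
    refine MeasureTheory.setIntegral_congr_fun measurableSet_Ioo fun s _ => ?_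
    have : v s = (v s - g s) + g s := by abel
    rw [this, smul_add, hwL s, smul_smul]
    rw [pow_two]
  have hpart1 : (∫ s in Set.Ioo a b, ((L.eval s)^2) • (v b - g b))
      = ((b-a)/(2*(q:ℝ)+1)) • (v b - g b) := by
    rw [_root_.integral_smul_const, convI, hL2]
  have hpart2 : (∫ s in Set.Ioo a b, L.eval s • g s) = 0 := by
    have hrw : ∀ s : ℝ, L.eval s • g s
        = ∑ i ∈ Finset.range q, (L.eval s * s ^ i) • cg i := by
      intro s
      rw [hcg0, Finset.smul_sum]
      exact Finset.sum_congr rfl fun i _ => by rw [smul_smul]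
    calc (∫ s in Set.Ioo a b, L.eval s • g s)
        = ∫ s in Set.Ioo a b, ∑ i ∈ Finset.range q, (L.eval s * s ^ i) • cg i := by
          refine MeasureTheory.setIntegral_congr_fun measurableSet_Ioo fun s _ => hrw s
      _ = ∑ i ∈ Finset.range q, ∫ s in Set.Ioo a b, (L.eval s * s ^ i) • cg i := by
          refine MeasureTheory.integral_finset_sum _ fun i _ => ?_
          exact intgOn ((L.continuous.mul (continuous_pow i)).smul continuous_const)
      _ = 0 := by
          refine Finset.sum_eq_zero fun i hi => ?_
          rw [_root_.integral_smul_const, hLorth i (Finset.mem_range.mp hi), zero_smul]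
  intro t
  rw [hsplit, hpart1, hpart2, add_zero, hwL t, smul_smul, smul_smul]
  congr 1
  field_simp
end Main
end

section
/- Let q ≥ 1 be an integer, let a < b be real numbers, set τ = b − a, ζ_q = 1/(4(2q + 1)), λ = ζ_q/τ, fix θ ∈ ℝ, and define φ(t) = θ − λ(t − a). Let H be a real inner product space, let w be an H-valued polynomial of degree at most q − 1, and let g be an L²(a, b)-orthogonal projection of the function t ↦ φ(t)·w(t) onto H-valued polynomials of degree at most q − 1. Then (∫_a^b ‖φ(t)w(t) − g(t)‖_H² dt)^{1/2} ≤ ζ_q · (∫_a^b ‖w(t)‖_H² dt)^{1/2}. -/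
open MeasureTheory

lemma IsPolyDeg.continuous {H : Type*} [NormedAddCommGroup H] [InnerProductSpace ℝ H]
    {k : ℕ} {v : ℝ → H} (hv : IsPolyDeg k v) : Continuous v := by
  obtain ⟨c, hc⟩ := hv
  have : v = fun t => ∑ i ∈ Finset.range (k + 1), t ^ i • c i := funext hc
  rw [this]
  exact continuous_finset_sum _ fun i _ => (continuous_pow i).smul continuous_const

/-- `L²` bound for the projection error of `φ·w`, where `φ(t) = θ − λ(t − a)` with
`λ = ζ_q/τ`, `ζ_q = 1/(4(2q+1))`, `τ = b − a`, and `w` an `H`-valued polynomial of degree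
at most `q − 1`. -/
theorem weighted_projection_L2_bound {H : Type*} [NormedAddCommGroup H]
    [InnerProductSpace ℝ H]
    (q : ℕ) (hq : 1 ≤ q) (a b : ℝ) (hab : a < b)
    (τ ζq lam θ : ℝ) (hτ : τ = b - a)
    (hζ : ζq = 1 / (4 * (2 * (q : ℝ) + 1))) (hlam : lam = ζq / τ)
    (φ : ℝ → ℝ) (hφ : ∀ t : ℝ, φ t = θ - lam * (t - a))
    (w g : ℝ → H) (hw : IsPolyDeg (q - 1) w)
    (hg : IsL2ProjOn a b (q - 1) (fun t => φ t • w t) g) :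
    Real.sqrt (∫ t in Set.Ioo a b, ‖φ t • w t - g t‖ ^ 2) ≤
      ζq * Real.sqrt (∫ t in Set.Ioo a b, ‖w t‖ ^ 2) := by
  obtain ⟨hg_poly, hg_orth⟩ := hg
  have hτ0 : (0:ℝ) < τ := by rw [hτ]; linarith
  have hζ0 : (0:ℝ) < ζq := by
    rw [hζ]; positivity
  have hlam0 : 0 ≤ lam := by rw [hlam]; positivity
  set f : ℝ → H := fun t => φ t • w t with hf
  set p : ℝ → H := fun t => θ • w t with hp
  obtain ⟨cw, hcw⟩ := hw
  have hwcont : Continuous w := IsPolyDeg.continuous ⟨cw, hcw⟩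
  have hgcont : Continuous g := hg_poly.continuous
  have hφcont : Continuous φ := by
    have : φ = fun t => θ - lam * (t - a) := funext hφ
    rw [this]; fun_prop
  have hfcont : Continuous f := hφcont.smul hwcont
  have hpcont : Continuous p := continuous_const.smul hwcont
  -- p and p - g are polynomials of degree ≤ q - 1
  have hp_poly : IsPolyDeg (q - 1) p := by
    refine ⟨fun i => θ • cw i, fun t => ?_⟩
    simp only [hp, hcw t, Finset.smul_sum, smul_comm θ]
  have hr_poly : IsPolyDeg (q - 1) (fun t => p t - g t) := by
    obtain ⟨cp, hcp⟩ := hp_poly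
    obtain ⟨cg, hcg⟩ := hg_poly
    refine ⟨fun i => cp i - cg i, fun t => ?_⟩
    simp [hcp t, hcg t, smul_sub, Finset.sum_sub_distrib]
  have horth := hg_orth (fun t => p t - g t) hr_poly
  -- integrability of everything in sight
  have hInt : ∀ (u : ℝ → ℝ), Continuous u → IntegrableOn u (Set.Ioo a b) := fun u hu =>
    (hu.continuousOn.integrableOn_compact isCompact_Icc).mono_set Set.Ioo_subset_Icc_self
  have h1 : IntegrableOn (fun t => ‖f t - g t‖ ^ 2) (Set.Ioo a b) :=
    hInt _ (by fun_prop)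
  have h2 : IntegrableOn (fun t => ‖p t - g t‖ ^ 2) (Set.Ioo a b) :=
    hInt _ (by fun_prop)
  have h3 : IntegrableOn (fun t => (inner ℝ (f t - g t) (p t - g t) : ℝ)) (Set.Ioo a b) :=
    hInt _ ((hfcont.sub hgcont).inner (hpcont.sub hgcont))
  have h4 : IntegrableOn (fun t => ‖f t - p t‖ ^ 2) (Set.Ioo a b) :=
    hInt _ (by fun_prop)
  have h5 : IntegrableOn (fun t => ζq ^ 2 * ‖w t‖ ^ 2) (Set.Ioo a b) :=
    hInt _ (by fun_prop)
  -- Pythagoras-type expansion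
  have hpoint : ∀ t, ‖f t - p t‖ ^ 2 =
      ‖f t - g t‖ ^ 2 - 2 * (inner ℝ (f t - g t) (p t - g t) : ℝ) + ‖p t - g t‖ ^ 2 := by
    intro t
    have : f t - p t = (f t - g t) - (p t - g t) := by abel
    rw [this, norm_sub_sq_real]
  have hsplit : ∫ t in Set.Ioo a b, ‖f t - p t‖ ^ 2 =
      (∫ t in Set.Ioo a b, ‖f t - g t‖ ^ 2)
      - 2 * (∫ t in Set.Ioo a b, (inner ℝ (f t - g t) (p t - g t) : ℝ))
      + ∫ t in Set.Ioo a b, ‖p t - g t‖ ^ 2 := by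
    have hmul : ∫ t in Set.Ioo a b, 2 * (inner ℝ (f t - g t) (p t - g t) : ℝ) =
        2 * ∫ t in Set.Ioo a b, (inner ℝ (f t - g t) (p t - g t) : ℝ) := by
      simpa [smul_eq_mul] using
        integral_smul (2:ℝ) (fun t => (inner ℝ (f t - g t) (p t - g t) : ℝ))
    have heq : (∫ t in Set.Ioo a b, ‖f t - p t‖ ^ 2) =
        ∫ t in Set.Ioo a b, (‖f t - g t‖ ^ 2
          - 2 * (inner ℝ (f t - g t) (p t - g t) : ℝ) + ‖p t - g t‖ ^ 2) :=
      setIntegral_congr_fun measurableSet_Ioo fun t _ => hpoint t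
    have h32 : IntegrableOn (fun t => 2 * (inner ℝ (f t - g t) (p t - g t) : ℝ))
        (Set.Ioo a b) := h3.const_mul 2
    have h13 : IntegrableOn (fun t => ‖f t - g t‖ ^ 2
        - 2 * (inner ℝ (f t - g t) (p t - g t) : ℝ)) (Set.Ioo a b) := h1.sub h32
    rw [heq, integral_add h13 h2, integral_sub h1 h32, hmul]
  have hle1 : (∫ t in Set.Ioo a b, ‖f t - g t‖ ^ 2) ≤
      ∫ t in Set.Ioo a b, ‖f t - p t‖ ^ 2 := by
    have hnn : 0 ≤ ∫ t in Set.Ioo a b, ‖p t - g t‖ ^ 2 :=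
      setIntegral_nonneg measurableSet_Ioo fun t _ => sq_nonneg _
    rw [hsplit, horth]
    linarith
  have hle2 : (∫ t in Set.Ioo a b, ‖f t - p t‖ ^ 2) ≤
      ∫ t in Set.Ioo a b, ζq ^ 2 * ‖w t‖ ^ 2 := by
    refine setIntegral_mono_on h4 h5 measurableSet_Ioo fun t ht => ?_
    have hfp : f t - p t = (-(lam * (t - a))) • w t := by
      simp only [hf, hp, hφ t, ← sub_smul]
      ring_nf
    rw [hfp, norm_smul]
    have hbound : |(-(lam * (t - a)))| ≤ ζq := by
      rw [abs_neg, abs_of_nonneg (mul_nonneg hlam0 (by linarith [ht.1]))]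
      have hta : t - a ≤ τ := by rw [hτ]; linarith [ht.2]
      have h1' : lam * (t - a) ≤ lam * τ := mul_le_mul_of_nonneg_left hta hlam0
      have h2' : lam * τ = ζq := by rw [hlam]; field_simp
      linarith
    calc (‖(-(lam * (t - a)))‖ * ‖w t‖) ^ 2
        = ‖(-(lam * (t - a)))‖ ^ 2 * ‖w t‖ ^ 2 := by ring
      _ ≤ ζq ^ 2 * ‖w t‖ ^ 2 := by
          have h0 : ‖(-(lam * (t - a)))‖ ≤ ζq := hbound
          have : ‖(-(lam * (t - a)))‖ ^ 2 ≤ ζq ^ 2 := by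
            exact pow_le_pow_left₀ (norm_nonneg _) h0 2
          nlinarith [sq_nonneg (‖w t‖)]
  have hfinal : (∫ t in Set.Ioo a b, ‖f t - g t‖ ^ 2) ≤
      ζq ^ 2 * ∫ t in Set.Ioo a b, ‖w t‖ ^ 2 := by
    have hmul : ∫ t in Set.Ioo a b, ζq ^ 2 * ‖w t‖ ^ 2 =
        ζq ^ 2 * ∫ t in Set.Ioo a b, ‖w t‖ ^ 2 := by
      simpa [smul_eq_mul] using integral_smul (ζq ^ 2) (fun t => ‖w t‖ ^ 2)
    rw [← hmul]; exact hle1.trans hle2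
  calc Real.sqrt (∫ t in Set.Ioo a b, ‖f t - g t‖ ^ 2)
      ≤ Real.sqrt (ζq ^ 2 * ∫ t in Set.Ioo a b, ‖w t‖ ^ 2) := Real.sqrt_le_sqrt hfinal
    _ = ζq * Real.sqrt (∫ t in Set.Ioo a b, ‖w t‖ ^ 2) := by
        rw [Real.sqrt_mul (sq_nonneg _), Real.sqrt_sq hζ0.le]
end

section
/- Let q ≥ 1 be an integer, let a < b be real numbers, set τ = b − a, let λ > 0 and θ ∈ ℝ, define φ(t) = θ − λ(t − a), and let L be the shifted Legendre polynomial of degree q on (a, b). Let H be a real inner product space, let v be an H-valued polynomial of degree at most q with coefficientwise derivative v', and let g be an L²(a, b)-orthogonal projection of the function t ↦ φ(t)·v'(t) onto H-valued polynomials of degree at most q − 1. Then ∫_a^b ⟨v(t), φ(t)v'(t) − g(t)⟩_H dt = −(λ·q·(2q + 1)/τ) · ‖∫_a^b L(t) v(t) dt‖_H²; in particular, this integral is nonpositive. -/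
open MeasureTheory

namespace WPAux

open Polynomial

variable {a b : ℝ}

lemma ioo_eq_interval {E : Type*} [NormedAddCommGroup E] [NormedSpace ℝ E]
    (hab : a ≤ b) (f : ℝ → E) :
    (∫ t in Set.Ioo a b, f t) = ∫ t in a..b, f t := by
  rw [intervalIntegral.integral_of_le hab, integral_Ioc_eq_integral_Ioo]

lemma cont_integrableOn {E : Type*} [NormedAddCommGroup E] {f : ℝ → E} (hf : Continuous f) :
    IntegrableOn f (Set.Ioo a b) :=
  (hf.continuousOn.integrableOn_compact isCompact_Icc).mono_set Set.Ioo_subset_Icc_self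

lemma poly_ftc (p : ℝ[X]) : ∫ t in a..b, (derivative p).eval t = p.eval b - p.eval a :=
  intervalIntegral.integral_eq_sub_of_hasDerivAt (fun x _ => p.hasDerivAt x)
    ((derivative p).continuous.intervalIntegrable _ _)

lemma poly_ibp (p r : ℝ[X]) :
    ∫ t in a..b, (derivative p).eval t * r.eval t =
      (p.eval b * r.eval b - p.eval a * r.eval a)
        - ∫ t in a..b, p.eval t * (derivative r).eval t := by
  have h := poly_ftc (a := a) (b := b) (p * r)
  rw [derivative_mul] at h
  simp only [eval_add, eval_mul] at h
  rw [intervalIntegral.integral_add (f := fun t => (derivative p).eval t * r.eval t)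
      (g := fun t => p.eval t * (derivative r).eval t)
      (((derivative p).continuous.mul r.continuous).intervalIntegrable _ _)
      ((p.continuous.mul (derivative r).continuous).intervalIntegrable _ _)] at h
  linarith

lemma beta_int (hab : a ≤ b) (n m : ℕ) :
    ∫ t in a..b, (t - a) ^ m * (b - t) ^ n
      = ((m.factorial : ℝ) * n.factorial / (m + n + 1).factorial) * (b - a) ^ (m + n + 1) := by
  induction n generalizing m with
  | zero =>
    simp only [pow_zero, mul_one, Nat.factorial_zero, Nat.cast_one, Nat.add_zero]
    have : (∫ t in a..b, (t - a) ^ m) = ∫ x in a - a..b - a, x ^ m := by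
      rw [← intervalIntegral.integral_comp_sub_right (fun x => x ^ m) a]
    rw [this, integral_pow]
    rw [sub_self]
    rw [Nat.factorial_succ]
    push_cast
    have h1 : (0:ℝ) ^ (m + 1) = 0 := by
      exact zero_pow (Nat.succ_ne_zero m)
    rw [h1]
    have h2 : ((m : ℝ) + 1) ≠ 0 := by positivity
    field_simp
    ring
  | succ n ih =>
    have key : ∫ t in a..b,
        (((m:ℝ)+1) * (t - a) ^ m * (b - t) ^ (n+1)
          - ((n:ℝ)+1) * ((t - a) ^ (m+1) * (b - t) ^ n)) = 0 := by
      have hder : ∀ t ∈ Set.uIcc a b, HasDerivAt (fun t => (t - a) ^ (m+1) * (b - t) ^ (n+1))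
          (((m:ℝ)+1) * (t - a) ^ m * (b - t) ^ (n+1)
            - ((n:ℝ)+1) * ((t - a) ^ (m+1) * (b - t) ^ n)) t := by
        intro t _
        have h1 : HasDerivAt (fun t : ℝ => (t - a) ^ (m+1))
            (((m:ℝ)+1) * (t - a) ^ m) t := by
          simpa using (((hasDerivAt_id t).sub_const a).fun_pow (m+1))
        have h2 : HasDerivAt (fun t : ℝ => (b - t) ^ (n+1))
            (-(((n:ℝ)+1) * (b - t) ^ n)) t := by
          have := ((hasDerivAt_const t b).sub (hasDerivAt_id t)).fun_pow (n+1)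
          simpa using this
        have := h1.fun_mul h2
        refine this.congr_deriv ?_
        push_cast
        ring
      have := intervalIntegral.integral_eq_sub_of_hasDerivAt hder (by
        apply Continuous.intervalIntegrable
        continuity)
      rw [this]
      simp
    rw [intervalIntegral.integral_sub (by apply Continuous.intervalIntegrable; continuity)
        (by apply Continuous.intervalIntegrable; continuity)] at key
    simp only [mul_assoc] at key
    rw [intervalIntegral.integral_const_mul, intervalIntegral.integral_const_mul] at key
    have hI := ih (m+1)
    have e1 : m + 1 + n + 1 = m + n + 2 := by omega
    have e2 : m + (n + 1) + 1 = m + n + 2 := by omega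
    rw [e1] at hI
    rw [e2]
    have hm1 : ((m:ℝ)+1) ≠ 0 := by positivity
    have hfac : ((m+n+2).factorial : ℝ) ≠ 0 := by
      exact_mod_cast (Nat.factorial_pos _).ne'
    have hX : (∫ t in a..b, (t - a) ^ m * (b - t) ^ (n+1))
        = ((n:ℝ)+1) * ((((m+1).factorial : ℝ) * n.factorial / (m+n+2).factorial)
            * (b - a) ^ (m+n+2)) / ((m:ℝ)+1) := by
      rw [← hI]
      field_simp at key ⊢
      linarith
    rw [hX, Nat.factorial_succ m, Nat.factorial_succ n]
    push_cast
    field_simp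


/-- A polynomial nonzero a.e. can't have zero L² norm on (a,b). -/
lemma poly_sq_int_zero (hab : a < b) (p : ℝ[X])
    (h : (∫ t in a..b, p.eval t * p.eval t) = 0) : p = 0 := by
  by_contra hp
  have hIoo : (∫ t in Set.Ioo a b, p.eval t * p.eval t) = 0 := by
    rw [ioo_eq_interval hab.le]; exact h
  set μ := volume.restrict (Set.Ioo a b) with hμ
  have hnonneg : 0 ≤ᵐ[μ] fun t => p.eval t * p.eval t :=
    Filter.Eventually.of_forall (fun t => mul_self_nonneg _)
  have hint : Integrable (fun t => p.eval t * p.eval t) μ :=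
    cont_integrableOn (p.continuous.mul p.continuous)
  have hsupp := (integral_pos_iff_support_of_nonneg_ae hnonneg hint)
  have hzero : μ (Function.support fun t => p.eval t * p.eval t) = 0 := by
    by_contra hne
    have : 0 < μ (Function.support fun t => p.eval t * p.eval t) :=
      lt_of_le_of_ne zero_le (Ne.symm hne)
    have := hsupp.mpr this
    rw [hIoo] at this
    exact lt_irrefl _ this
  have hroots : Set.Finite {x : ℝ | p.IsRoot x} := p.finite_setOf_isRoot hp
  have hcover : Set.Ioo a b ⊆ (Function.support fun t => p.eval t * p.eval t)
      ∪ {x : ℝ | p.IsRoot x} := by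
    intro x _
    by_cases hx : p.eval x = 0
    · exact Or.inr hx
    · exact Or.inl (by simp [Function.support, hx])
  have hle : μ (Set.Ioo a b) ≤ 0 := by
    calc μ (Set.Ioo a b) ≤ μ ((Function.support fun t => p.eval t * p.eval t)
          ∪ {x : ℝ | p.IsRoot x}) := measure_mono hcover
      _ ≤ μ (Function.support fun t => p.eval t * p.eval t) + μ {x : ℝ | p.IsRoot x} :=
          measure_union_le _ _
      _ ≤ 0 + volume {x : ℝ | p.IsRoot x} := by
          gcongr
          · exact hzero.le
          · exact Measure.restrict_le_self
      _ = 0 := by rw [zero_add, hroots.measure_zero]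
  have hvol : μ (Set.Ioo a b) = ENNReal.ofReal (b - a) := by
    rw [hμ, Measure.restrict_apply measurableSet_Ioo, Set.inter_self, Real.volume_Ioo]
  rw [hvol] at hle
  have : (0:ℝ) < b - a := sub_pos.mpr hab
  rw [nonpos_iff_eq_zero, ENNReal.ofReal_eq_zero] at hle
  linarith


lemma orth_zero (hab : a < b) (q : ℕ) (p : ℝ[X]) (hdeg : p.natDegree ≤ q)
    (hcq : p.coeff q = 0)
    (horth : ∀ j, j < q → (∫ t in a..b, p.eval t * t ^ j) = 0) : p = 0 := by
  apply poly_sq_int_zero hab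
  have hev : ∀ t : ℝ, p.eval t = ∑ j ∈ Finset.range (q+1), p.coeff j * t ^ j := fun t =>
    eval_eq_sum_range' (lt_of_le_of_lt hdeg (Nat.lt_succ_self q)) t
  have step1 : (∫ t in a..b, p.eval t * p.eval t)
      = ∫ t in a..b, ∑ j ∈ Finset.range (q+1), p.coeff j * (p.eval t * t ^ j) := by
    congr 1
    funext t
    nth_rewrite 2 [hev t]
    rw [Finset.mul_sum]
    apply Finset.sum_congr rfl
    intro j _
    ring
  rw [step1, intervalIntegral.integral_finset_sum]
  · apply Finset.sum_eq_zero
    intro j hj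
    rw [intervalIntegral.integral_const_mul]
    rcases Nat.lt_succ_iff_lt_or_eq.mp (Finset.mem_range.mp hj) with h | h
    · rw [horth j h, mul_zero]
    · rw [h, hcq, zero_mul]
  · intro j _
    exact (continuous_const.mul (p.continuous.mul (continuous_pow j))).intervalIntegrable _ _

lemma orth_prop (hab : a < b) (q : ℕ) (L : ℝ[X]) (hLdeg : L.natDegree ≤ q)
    (hLorth : ∀ j, j < q → (∫ t in a..b, L.eval t * t ^ j) = 0)
    (hLb : L.eval b = 1)
    (p : ℝ[X]) (hdeg : p.natDegree ≤ q)
    (horth : ∀ j, j < q → (∫ t in a..b, p.eval t * t ^ j) = 0) :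
    L.coeff q ≠ 0 ∧ p = Polynomial.C (p.coeff q / L.coeff q) * L := by
  have hLne : L.coeff q ≠ 0 := by
    intro h0
    have : L = 0 := orth_zero hab q L hLdeg h0 hLorth
    rw [this] at hLb
    simp at hLb
  refine ⟨hLne, ?_⟩
  set r := Polynomial.C (L.coeff q) * p - Polynomial.C (p.coeff q) * L with hr
  have hrdeg : r.natDegree ≤ q := by
    apply le_trans (natDegree_sub_le _ _)
    simp only [max_le_iff]
    exact ⟨le_trans (natDegree_C_mul_le _ _) hdeg, le_trans (natDegree_C_mul_le _ _) hLdeg⟩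
  have hrcq : r.coeff q = 0 := by
    simp only [hr, coeff_sub, coeff_C_mul]
    ring
  have hrorth : ∀ j, j < q → (∫ t in a..b, r.eval t * t ^ j) = 0 := by
    intro j hj
    have : ∀ t : ℝ, r.eval t * t ^ j
        = L.coeff q * (p.eval t * t ^ j) - p.coeff q * (L.eval t * t ^ j) := by
      intro t; simp only [hr, eval_sub, eval_mul, eval_C]; ring
    rw [show (fun t => r.eval t * t ^ j) = fun t =>
        L.coeff q * (p.eval t * t ^ j) - p.coeff q * (L.eval t * t ^ j) from funext this]
    rw [intervalIntegral.integral_sub (f := fun t => L.coeff q * (p.eval t * t ^ j))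
        (g := fun t => p.coeff q * (L.eval t * t ^ j))
        ((continuous_const.mul (p.continuous.mul (continuous_pow j))).intervalIntegrable _ _)
        ((continuous_const.mul (L.continuous.mul (continuous_pow j))).intervalIntegrable _ _),
      intervalIntegral.integral_const_mul, intervalIntegral.integral_const_mul,
      horth j hj, hLorth j hj]
    ring
  have hr0 : r = 0 := orth_zero hab q r hrdeg hrcq hrorth
  have : Polynomial.C (L.coeff q) * p = Polynomial.C (p.coeff q) * L := by
    have := sub_eq_zero.mp hr0
    exact this
  have h2 := congrArg (fun s => Polynomial.C (L.coeff q)⁻¹ * s) this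
  rw [← mul_assoc, ← mul_assoc, ← Polynomial.C_mul, ← Polynomial.C_mul,
    inv_mul_cancel₀ hLne] at h2
  rw [Polynomial.C_1, one_mul] at h2
  rw [div_eq_inv_mul]
  exact h2


lemma key_identity (hab : a < b) (q : ℕ) (L : ℝ[X]) (hLdeg : L.natDegree ≤ q)
    (hLorth : ∀ j, j < q → (∫ t in a..b, L.eval t * t ^ j) = 0)
    (hLb : L.eval b = 1) :
    L.coeff q ≠ 0 ∧
    L.coeff q * (∫ t in a..b, L.eval t * t ^ q) = (b - a) / (2 * (q:ℝ) + 1) := by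
  set W : ℝ[X] := (X - Polynomial.C a) ^ q * (X - Polynomial.C b) ^ q with hW
  set R : ℝ[X] := derivative^[q] W with hR
  have hWdeg : W.natDegree = 2 * q := by
    rw [hW, Polynomial.Monic.natDegree_mul ((monic_X_sub_C a).pow q) ((monic_X_sub_C b).pow q),
      natDegree_pow, natDegree_pow]
    simp [natDegree_X_sub_C]
    ring
  have hWmonic : W.Monic := ((monic_X_sub_C a).pow q).mul ((monic_X_sub_C b).pow q)
  have hRdeg : R.natDegree ≤ q := by
    refine le_trans (natDegree_iterate_derivative W q) ?_
    rw [hWdeg]; omega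
  have hRcoeff : R.coeff q = ((2 * q).descFactorial q : ℝ) := by
    rw [hR, coeff_iterate_derivative]
    have : q + q = 2 * q := by ring
    rw [this, ← hWdeg, Polynomial.coeff_natDegree, hWmonic.leadingCoeff]
    simp
  -- vanishing of lower iterated derivatives at the endpoints
  have hvan : ∀ k, k < q → (derivative^[k] W).eval a = 0 ∧ (derivative^[k] W).eval b = 0 := by
    intro k hk
    rw [hW, iterate_derivative_mul]
    constructor <;>
    · rw [eval_finset_sum]
      apply Finset.sum_eq_zero
      intro i hi
      rw [Finset.mem_range, Nat.lt_succ_iff] at hi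
      rw [iterate_derivative_X_sub_pow, iterate_derivative_X_sub_pow]
      simp only [smul_mul_assoc, eval_smul, eval_mul, eval_pow, eval_sub, eval_X, eval_C,
        smul_eq_mul, nsmul_eq_mul, sub_self]
      first
      | (rw [zero_pow (show q - (k - i) ≠ 0 by omega)]; ring)
      | (rw [zero_pow (show q - i ≠ 0 by omega)]; ring)
  -- iterated integration by parts
  have hS : ∀ k, k ≤ q → ∀ r : ℝ[X],
      (∫ t in a..b, (derivative^[k] W).eval t * r.eval t)
        = (-1:ℝ)^k * ∫ t in a..b, W.eval t * (derivative^[k] r).eval t := by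
    intro k
    induction k with
    | zero => intro _ r; simp
    | succ k ih =>
      intro hk r
      have hk' : k < q := hk
      have h1 : (∫ t in a..b, (derivative^[k+1] W).eval t * r.eval t)
          = - ∫ t in a..b, (derivative^[k] W).eval t * (derivative r).eval t := by
        have := poly_ibp (a := a) (b := b) (derivative^[k] W) r
        rw [← Function.iterate_succ_apply' derivative k W] at this
        rw [this, (hvan k hk').1, (hvan k hk').2]
        ring
      rw [h1, ih (le_of_lt hk') (derivative r), ← Function.iterate_succ_apply derivative k]
      rw [Function.iterate_succ_apply]
      ring
  -- orthogonality of R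
  have hRorth : ∀ j, j < q → (∫ t in a..b, R.eval t * t ^ j) = 0 := by
    intro j hj
    have : (∫ t in a..b, R.eval t * t ^ j) = ∫ t in a..b, R.eval t * (X ^ j : ℝ[X]).eval t := by
      simp
    rw [this, hR, hS q le_rfl (X ^ j), iterate_derivative_eq_zero (by
      rw [natDegree_X_pow]; exact hj)]
    simp
  -- the beta integral of W
  have hWint : (∫ t in a..b, W.eval t)
      = (-1:ℝ)^q * (((q.factorial : ℝ) * q.factorial / (2*q + 1).factorial)
          * (b - a) ^ (2*q + 1)) := by
    have hpt : ∀ t : ℝ, W.eval t = (-1:ℝ)^q * ((t - a) ^ q * (b - t) ^ q) := by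
      intro t
      rw [hW]
      simp only [eval_mul, eval_pow, eval_sub, eval_X, eval_C]
      rw [show t - b = -1 * (b - t) by ring, mul_pow]
      ring
    rw [show (fun t => W.eval t) = fun t => (-1:ℝ)^q * ((t - a) ^ q * (b - t) ^ q)
      from funext hpt]
    rw [intervalIntegral.integral_const_mul, beta_int hab.le q q]
    rw [show q + q + 1 = 2*q + 1 by ring]
  -- the q-th moment of R
  have hRq : (∫ t in a..b, R.eval t * t ^ q)
      = ((q.factorial : ℝ) * q.factorial * q.factorial / (2*q + 1).factorial)
          * (b - a) ^ (2*q + 1) := by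
    have : (∫ t in a..b, R.eval t * t ^ q) = ∫ t in a..b, R.eval t * (X ^ q : ℝ[X]).eval t := by
      simp
    rw [this, hR, hS q le_rfl (X ^ q)]
    rw [iterate_derivative_X_pow_eq_natCast_mul q q, Nat.sub_self, pow_zero,
      Nat.descFactorial_self]
    have : (∫ t in a..b, W.eval t * ((q.factorial : ℝ[X]) * 1).eval t)
        = (q.factorial : ℝ) * ∫ t in a..b, W.eval t := by
      rw [← intervalIntegral.integral_const_mul]
      congr 1
      funext t
      simp [mul_comm]
    rw [this, hWint]
    have hone : ((-1:ℝ)^q) * ((-1:ℝ)^q) = 1 := by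
      rw [← pow_add]
      exact Even.neg_one_pow ⟨q, by ring⟩
    linear_combination ((q.factorial : ℝ) * ((q.factorial : ℝ) * q.factorial
      / ((2*q+1).factorial : ℝ) * (b - a) ^ (2*q+1))) * hone
  -- evaluation of R at b
  have hRb : R.eval b = (q.factorial : ℝ) * (b - a) ^ q := by
    rw [hR, hW, iterate_derivative_mul, eval_finset_sum]
    rw [Finset.sum_eq_single q]
    · rw [Nat.sub_self, Function.iterate_zero_apply, iterate_derivative_X_sub_pow_self]
      simp [mul_comm]
    · intro i hi hne
      rw [Finset.mem_range, Nat.lt_succ_iff] at hi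
      rw [iterate_derivative_X_sub_pow, iterate_derivative_X_sub_pow]
      simp only [smul_mul_assoc, eval_smul, eval_mul, eval_pow, eval_sub, eval_X, eval_C,
        smul_eq_mul, nsmul_eq_mul, sub_self]
      rw [zero_pow (show q - i ≠ 0 by omega)]
      ring
    · intro h
      exact absurd (Finset.self_mem_range_succ q) h
  -- proportionality
  obtain ⟨hLne, hprop⟩ := orth_prop hab q L hLdeg hLorth hLb R hRdeg hRorth
  refine ⟨hLne, ?_⟩
  -- evaluate proportionality at b
  have hevalb : R.eval b = R.coeff q / L.coeff q := by
    conv_lhs => rw [hprop]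
    rw [eval_mul, eval_C, hLb, mul_one]
  -- integrate proportionality against t^q
  have hintprop : (∫ t in a..b, R.eval t * t ^ q)
      = (R.coeff q / L.coeff q) * ∫ t in a..b, L.eval t * t ^ q := by
    rw [← intervalIntegral.integral_const_mul]
    congr 1
    funext t
    conv_lhs => rw [hprop]
    rw [eval_mul, eval_C]
    ring
  -- final arithmetic
  have hτ : (0:ℝ) < b - a := sub_pos.mpr hab
  have hfacq : (0:ℝ) < (q.factorial : ℝ) := by exact_mod_cast q.factorial_pos
  have hfac2 : (0:ℝ) < ((2*q+1).factorial : ℝ) := by exact_mod_cast (2*q+1).factorial_pos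
  have hdesc : ((2*q).descFactorial q : ℝ) * (q.factorial : ℝ) = ((2*q).factorial : ℝ) := by
    have h := Nat.factorial_mul_descFactorial (show q ≤ 2*q by omega)
    rw [show 2*q - q = q by omega] at h
    have h2 : (2*q).descFactorial q * q.factorial = (2*q).factorial := by
      rw [mul_comm]; exact h
    exact_mod_cast h2
  have h2qfac : (0:ℝ) < ((2*q).factorial : ℝ) := by exact_mod_cast (2*q).factorial_pos
  have hRqne' : ((2*q).descFactorial q : ℝ) ≠ 0 := by
    intro h0
    rw [h0, zero_mul] at hdesc
    linarith
  have hfact21 : ((2*q+1).factorial : ℝ) = (2*(q:ℝ)+1) * ((2*q).factorial : ℝ) := by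
    rw [Nat.factorial_succ]
    push_cast
    ring
  -- from hevalb : q! τ^q = Rq / ℓ  ⇒  ℓ = Rq / (q! τ^q)
  have hl : L.coeff q = R.coeff q / ((q.factorial : ℝ) * (b - a) ^ q) := by
    rw [hRb] at hevalb
    field_simp at hevalb ⊢
    linarith [hevalb]
  rw [hintprop] at hRq
  -- solve for ∫ L t^q
  have hRqne : R.coeff q ≠ 0 := by
    rw [hRcoeff]; exact hRqne'
  have hIL : (∫ t in a..b, L.eval t * t ^ q)
      = (L.coeff q / R.coeff q) * (((q.factorial : ℝ) * q.factorial * q.factorial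
          / (2*q + 1).factorial) * (b - a) ^ (2*q + 1)) := by
    rw [← hRq]
    field_simp
  have hRqval : ((2*q).descFactorial q : ℝ) = ((2*q).factorial : ℝ) / (q.factorial : ℝ) := by
    rw [← hdesc]
    field_simp
  have hpow : (b-a) ^ (2*q+1) = (b-a)^q * (b-a)^q * (b-a) := by
    rw [show 2*q+1 = q+q+1 by ring, pow_succ, pow_add]
  have htne : (b-a) ≠ 0 := ne_of_gt hτ
  have htqne : (b-a)^q ≠ 0 := pow_ne_zero q htne
  have h2q1ne : (2*(q:ℝ)+1) ≠ 0 := by positivity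
  rw [hIL, hl, hRcoeff, hRqval, hfact21, hpow]
  field_simp

end WPAux

open WPAux

/-- If `L` is the shifted Legendre polynomial of degree `q ≥ 1` on `(a, b)`,
`φ(t) = θ − λ(t − a)` with `λ > 0`, `v` is an `H`-valued polynomial of degree at most `q`
with coefficientwise derivative `v'`, and `g` is an `L²(a,b)`-orthogonal projection of
`t ↦ φ(t) v'(t)` onto `H`-valued polynomials of degree at most `q − 1`, then
`∫_a^b ⟨v(t), φ(t)v'(t) − g(t)⟩ dt = −(λ q (2q+1)/τ) ‖∫_a^b L(t) v(t) dt‖²`; in particular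
this integral is nonpositive. -/
theorem weighted_projection_inner_integral {H : Type*} [NormedAddCommGroup H]
    [InnerProductSpace ℝ H] [CompleteSpace H]
    (q : ℕ) (hq : 1 ≤ q) (a b : ℝ) (hab : a < b)
    (τ lam θ : ℝ) (hτ : τ = b - a) (hlam : 0 < lam)
    (φ : ℝ → ℝ) (hφ : ∀ t : ℝ, φ t = θ - lam * (t - a))
    (L : Polynomial ℝ) (hLdeg : L.natDegree ≤ q)
    (hLorth : ∀ j : ℕ, j < q → ∫ t in Set.Ioo a b, L.eval t * t ^ j = 0)
    (hLb : L.eval b = 1)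
    (v v' : ℝ → H)
    (hvv' : ∃ c : ℕ → H,
      (∀ t : ℝ, v t = ∑ i ∈ Finset.range (q + 1), t ^ i • c i) ∧
      (∀ t : ℝ, v' t = ∑ i ∈ Finset.range (q + 1), ((i : ℝ) * t ^ (i - 1)) • c i))
    (g : ℝ → H) (hg : IsL2ProjOn a b (q - 1) (fun t => φ t • v' t) g) :
    (∫ t in Set.Ioo a b, (inner ℝ (v t) (φ t • v' t - g t) : ℝ)) =
      -(lam * (q : ℝ) * (2 * (q : ℝ) + 1) / τ) *
        ‖∫ t in Set.Ioo a b, L.eval t • v t‖ ^ 2 ∧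
    (∫ t in Set.Ioo a b, (inner ℝ (v t) (φ t • v' t - g t) : ℝ)) ≤ 0 := by
  obtain ⟨c, hv, hv'⟩ := hvv'
  obtain ⟨⟨e, he⟩, horthg⟩ := hg
  have hq1 : q - 1 + 1 = q := Nat.succ_pred_eq_of_pos hq
  rw [hq1] at he
  -- interval-integral forms of the Legendre orthogonality
  have hLorth' : ∀ j : ℕ, j < q → ∫ t in a..b, L.eval t * t ^ j = 0 := by
    intro j hj
    rw [← ioo_eq_interval hab.le]
    exact hLorth j hj
  obtain ⟨hLne, hkey⟩ := key_identity hab q L hLdeg hLorth' hLb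
  set ℓ : ℝ := L.coeff q with hℓ
  set A : ℝ := θ + lam * a with hA
  -- normalized coefficients
  set cc : ℕ → H := fun i => if i ≤ q then c i else 0 with hcc
  have hvcc : ∀ t : ℝ, v t = ∑ i ∈ Finset.range (q + 1), t ^ i • cc i := by
    intro t
    rw [hv t]
    refine Finset.sum_congr rfl fun i hi => ?_
    rw [Finset.mem_range, Nat.lt_succ_iff] at hi
    simp [hcc, hi]
  have hv'cc : ∀ t : ℝ, v' t = ∑ i ∈ Finset.range (q + 1), ((i : ℝ) * t ^ (i - 1)) • cc i := by
    intro t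
    rw [hv' t]
    refine Finset.sum_congr rfl fun i hi => ?_
    rw [Finset.mem_range, Nat.lt_succ_iff] at hi
    simp [hcc, hi]
  set ee : ℕ → H := fun i => if i < q then e i else 0 with hee
  have hgee : ∀ t : ℝ, g t = ∑ i ∈ Finset.range (q + 1), t ^ i • ee i := by
    intro t
    rw [he t, Finset.sum_range_succ]
    have h1 : ee q = 0 := by simp [hee]
    rw [h1, smul_zero, add_zero]
    refine Finset.sum_congr rfl fun i hi => ?_
    rw [Finset.mem_range] at hi
    simp [hee, hi]
  set d : ℕ → H := fun i =>
    ((A * ((i : ℝ) + 1)) • cc (i + 1) - (lam * (i : ℝ)) • cc i) - ee i with hd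
  have hdq : d q = -((lam * (q : ℝ)) • c q) := by
    have h1 : cc (q + 1) = 0 := by simp [hcc]
    have h2 : ee q = 0 := by simp [hee]
    have h3 : cc q = c q := by simp [hcc]
    simp [hd, h1, h2, h3]
  -- the residual is a polynomial with coefficients d
  have hh : ∀ t : ℝ, φ t • v' t - g t = ∑ i ∈ Finset.range (q + 1), t ^ i • d i := by
    intro t
    have hsum1 : φ t • v' t = ∑ i ∈ Finset.range (q + 1),
        ((A * ((i : ℝ) * t ^ (i - 1))) • cc i - (lam * (i : ℝ) * t ^ i) • cc i) := by
      rw [hv'cc t, Finset.smul_sum]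
      refine Finset.sum_congr rfl fun i _ => ?_
      rw [smul_smul, ← sub_smul]
      congr 1
      have hpow : (i : ℝ) * t ^ (i - 1) * t = (i : ℝ) * t ^ i := by
        cases i with
        | zero => simp
        | succ n => rw [Nat.succ_sub_one, pow_succ]; ring
      rw [hφ t, hA]
      linear_combination (-lam) * hpow
    have hsplit : (∑ i ∈ Finset.range (q + 1),
        ((A * ((i : ℝ) * t ^ (i - 1))) • cc i - (lam * (i : ℝ) * t ^ i) • cc i))
        = (∑ i ∈ Finset.range (q + 1), (A * ((i : ℝ) * t ^ (i - 1))) • cc i)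
          - ∑ i ∈ Finset.range (q + 1), (lam * (i : ℝ) * t ^ i) • cc i :=
      Finset.sum_sub_distrib _ _
    have hfirst : (∑ i ∈ Finset.range (q + 1), (A * ((i : ℝ) * t ^ (i - 1))) • cc i)
        = ∑ i ∈ Finset.range (q + 1), t ^ i • ((A * ((i : ℝ) + 1)) • cc (i + 1)) := by
      rw [Finset.sum_range_succ' (fun i => (A * ((i : ℝ) * t ^ (i - 1))) • cc i) q]
      rw [Finset.sum_range_succ (fun i => t ^ i • ((A * ((i : ℝ) + 1)) • cc (i + 1))) q]
      have hz1 : (A * ((0 : ℕ) * t ^ (0 - 1) : ℝ)) • cc 0 = 0 := by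
        norm_num
      have hz2 : t ^ q • ((A * ((q : ℝ) + 1)) • cc (q + 1)) = 0 := by
        have : cc (q + 1) = 0 := by simp [hcc]
        rw [this, smul_zero, smul_zero]
      rw [hz1, hz2, add_zero, add_zero]
      refine Finset.sum_congr rfl fun i _ => ?_
      rw [smul_smul]
      congr 1
      simp only [Nat.add_sub_cancel]
      push_cast
      ring
    rw [hsum1, hsplit, hfirst, hgee t]
    rw [← Finset.sum_sub_distrib, ← Finset.sum_sub_distrib]
    refine Finset.sum_congr rfl fun i _ => ?_
    rw [hd]
    simp only [smul_sub]
    congr 1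
    rw [smul_smul, smul_smul]
    congr 1
    ring
  -- scalar polynomial per direction w
  have hdirw : ∀ w : H, ∀ t : ℝ,
      (inner ℝ (∑ i ∈ Finset.range (q + 1), t ^ i • d i) w : ℝ)
        = ((inner ℝ (d q) w : ℝ) / ℓ) * L.eval t := by
    intro w
    set pw : Polynomial ℝ := ∑ i ∈ Finset.range (q + 1),
      Polynomial.C (inner ℝ (d i) w : ℝ) * Polynomial.X ^ i with hpw
    have hpweval : ∀ t : ℝ, pw.eval t
        = (inner ℝ (∑ i ∈ Finset.range (q + 1), t ^ i • d i) w : ℝ) := by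
      intro t
      rw [hpw, Polynomial.eval_finset_sum, sum_inner]
      refine Finset.sum_congr rfl fun i _ => ?_
      rw [real_inner_smul_left, Polynomial.eval_mul, Polynomial.eval_C, Polynomial.eval_pow,
        Polynomial.eval_X]
      ring
    have hpwdeg : pw.natDegree ≤ q := by
      refine Polynomial.natDegree_sum_le_of_forall_le _ _ fun i hi => ?_
      refine le_trans (Polynomial.natDegree_C_mul_le _ _) ?_
      rw [Polynomial.natDegree_X_pow]
      exact Nat.lt_succ_iff.mp (Finset.mem_range.mp hi)
    have hpwcoeff : pw.coeff q = (inner ℝ (d q) w : ℝ) := by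
      rw [hpw, Polynomial.finset_sum_coeff]
      rw [Finset.sum_eq_single q]
      · rw [Polynomial.coeff_C_mul, Polynomial.coeff_X_pow]
        simp
      · intro i _ hne
        rw [Polynomial.coeff_C_mul, Polynomial.coeff_X_pow, if_neg (Ne.symm hne), mul_zero]
      · intro h
        exact absurd (Finset.self_mem_range_succ q) h
    have hpworth : ∀ j, j < q → (∫ t in a..b, pw.eval t * t ^ j) = 0 := by
      intro j hj
      have hrpoly : IsPolyDeg (q - 1) (fun t : ℝ => t ^ j • w) := by
        refine ⟨fun i => if i = j then w else 0, fun t => ?_⟩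
        rw [hq1]
        rw [Finset.sum_eq_single j]
        · simp
        · intro i _ hne
          simp [hne]
        · intro h
          exact absurd (Finset.mem_range.mpr hj) h
      have h0 := horthg _ hrpoly
      rw [ioo_eq_interval hab.le] at h0
      rw [← h0]
      congr 1
      funext t
      rw [hpweval t, ← hh t, real_inner_smul_right]
      ring
    obtain ⟨_, hprop⟩ := orth_prop hab q L hLdeg hLorth' hLb pw hpwdeg hpworth
    intro t
    rw [← hpweval t]
    conv_lhs => rw [hprop]
    rw [Polynomial.eval_mul, Polynomial.eval_C, hpwcoeff]
  -- the residual is a multiple of L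
  have hres : ∀ t : ℝ, φ t • v' t - g t = (L.eval t / ℓ) • d q := by
    intro t
    rw [hh t]
    apply ext_inner_right ℝ
    intro w
    rw [hdirw w t, real_inner_smul_left]
    ring
  -- continuity facts
  have hvcont : Continuous v := by
    have : v = fun t => ∑ i ∈ Finset.range (q + 1), t ^ i • c i := funext hv
    rw [this]
    exact continuous_finset_sum _ fun i _ => (continuous_pow i).smul continuous_const
  have hLvint : IntegrableOn (fun t => L.eval t • v t) (Set.Ioo a b) :=
    cont_integrableOn (L.continuous.smul hvcont)
  -- compute the vector integral
  have hI3 : (∫ t in Set.Ioo a b, L.eval t • v t) = (∫ t in a..b, L.eval t * t ^ q) • c q := by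
    have hstep : (∫ t in Set.Ioo a b, L.eval t • v t)
        = ∑ i ∈ Finset.range (q + 1), (∫ t in Set.Ioo a b, (L.eval t * t ^ i)) • c i := by
      have hpt : (fun t => L.eval t • v t)
          = fun t => ∑ i ∈ Finset.range (q + 1), (L.eval t * t ^ i) • c i := by
        funext t
        rw [hv t, Finset.smul_sum]
        refine Finset.sum_congr rfl fun i _ => ?_
        rw [smul_smul]
      rw [hpt, integral_finset_sum _ fun i _ =>
        cont_integrableOn (f := fun t => (L.eval t * t ^ i) • c i) ((L.continuous.mul (continuous_pow i)).smul continuous_const)]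
      refine Finset.sum_congr rfl fun i _ => ?_
      exact integral_smul_const _ _
    rw [hstep, Finset.sum_eq_single q]
    · rw [ioo_eq_interval hab.le]
    · intro i _ hne
      have hi : i < q := by
        rcases Nat.lt_succ_iff_lt_or_eq.mp (Finset.mem_range.mp ‹i ∈ Finset.range (q+1)›) with
          h | h
        · exact h
        · exact absurd h hne
      rw [hLorth i hi, zero_smul]
    · intro h
      exact absurd (Finset.self_mem_range_succ q) h
  set K : ℝ := ∫ t in a..b, L.eval t * t ^ q with hK
  -- compute the main integral
  have hI1 : (∫ t in Set.Ioo a b, (inner ℝ (v t) (φ t • v' t - g t) : ℝ))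
      = (1 / ℓ) * (inner ℝ (d q) ((∫ t in Set.Ioo a b, L.eval t • v t)) : ℝ) := by
    have hpt : (fun t => (inner ℝ (v t) (φ t • v' t - g t) : ℝ))
        = fun t => (1 / ℓ) * (inner ℝ (d q) (L.eval t • v t) : ℝ) := by
      funext t
      rw [hres t, real_inner_smul_right, real_inner_smul_right, real_inner_comm]
      ring
    rw [hpt, integral_const_mul, ← integral_inner hLvint]
  have hτpos : (0 : ℝ) < τ := by rw [hτ]; linarith
  have hτne : τ ≠ 0 := ne_of_gt hτpos
  have hKval : K = τ / ((2 * (q : ℝ) + 1) * ℓ) := by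
    have h2q1 : (2 * (q : ℝ) + 1) ≠ 0 := by positivity
    rw [← hτ] at hkey
    field_simp at hkey ⊢
    linarith [hkey]
  have hnormsq : ‖∫ t in Set.Ioo a b, L.eval t • v t‖ ^ 2 = K ^ 2 * ‖c q‖ ^ 2 := by
    rw [hI3, norm_smul, mul_pow]
    congr 1
    rw [Real.norm_eq_abs, sq_abs]
  have hmain : (∫ t in Set.Ioo a b, (inner ℝ (v t) (φ t • v' t - g t) : ℝ))
      = -(lam * (q : ℝ) * (2 * (q : ℝ) + 1) / τ) *
        ‖∫ t in Set.Ioo a b, L.eval t • v t‖ ^ 2 := by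
    rw [hI1, hnormsq, hI3, real_inner_smul_right, hdq, inner_neg_left, real_inner_smul_left,
      real_inner_self_eq_norm_sq, hKval]
    have h2q1 : (2 * (q : ℝ) + 1) ≠ 0 := by positivity
    field_simp
  refine ⟨hmain, ?_⟩
  rw [hmain]
  have h1 : 0 ≤ (lam * (q : ℝ) * (2 * (q : ℝ) + 1) / τ) *
      ‖∫ t in Set.Ioo a b, L.eval t • v t‖ ^ 2 := by positivity
  linarith
end

section
/- For every integer q ≥ 0, all real numbers a < b, and every real polynomial p of degree at most q, sup_{t ∈ [a, b]} |p(t)| ≤ (q + 1)·(b − a)^{−1/2}·(∫_a^b p(t)² dt)^{1/2}. -/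
open MeasureTheory Polynomial

namespace PolySupL2




noncomputable def w (n : ℕ) : Polynomial ℝ := X ^ n * (X - C 1) ^ n

lemma wdef (n : ℕ) : w n = X ^ n * (X - C 1) ^ n := rfl

lemma deriv_dvd : ∀ (j k : ℕ) (u : Polynomial ℝ), ∃ v : Polynomial ℝ,
    derivative^[j] (X ^ (k + j) * (X - C 1) ^ (k + j) * u)
      = X ^ k * (X - C 1) ^ k * v := by
  intro j
  induction j with
  | zero => exact fun k u => ⟨u, by simp⟩
  | succ j ih =>
    intro k u
    have hstep : derivative (X ^ (k + (j+1)) * (X - C 1) ^ (k + (j+1)) * u)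
        = X ^ (k + j) * (X - C 1) ^ (k + j) *
          (C ((k:ℝ) + j + 1) * ((X - C 1) * u + X * u) + X * (X - C 1) * derivative u) := by
      have h1 : (k + (j+1)) = (k + j) + 1 := by ring
      rw [h1]
      simp only [derivative_mul, derivative_pow, derivative_X, derivative_X_sub_C]
      push_cast
      ring
    obtain ⟨v, hv⟩ := ih k
      (C ((k:ℝ) + j + 1) * ((X - C 1) * u + X * u) + X * (X - C 1) * derivative u)
    exact ⟨v, by rw [Function.iterate_succ_apply, hstep, hv]⟩

lemma boundary_zero {n j : ℕ} (h : j < n) :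
    (derivative^[j] (w n)).eval 0 = 0 ∧ (derivative^[j] (w n)).eval 1 = 0 := by
  obtain ⟨k, rfl⟩ : ∃ k, n = (k + 1) + j := ⟨n - j - 1, by omega⟩
  obtain ⟨v, hv⟩ := deriv_dvd j (k + 1) 1
  rw [mul_one] at hv
  rw [w, hv]
  constructor <;> simp [pow_succ]

/-- One integration by parts for polynomials on `[0,1]`. -/
lemma ibp (P Q : Polynomial ℝ) :
    ∫ x in (0:ℝ)..1, (derivative P).eval x * Q.eval x
      = P.eval 1 * Q.eval 1 - P.eval 0 * Q.eval 0
        - ∫ x in (0:ℝ)..1, P.eval x * (derivative Q).eval x := by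
  have h := intervalIntegral.integral_mul_deriv_eq_deriv_mul
    (a := (0:ℝ)) (b := 1)
    (u := fun x => Q.eval x) (v := fun x => P.eval x)
    (u' := fun x => (derivative Q).eval x) (v' := fun x => (derivative P).eval x)
    (fun x _ => Q.hasDerivAt x) (fun x _ => P.hasDerivAt x)
    ((derivative Q).continuous.intervalIntegrable _ _)
    ((derivative P).continuous.intervalIntegrable _ _)
  simp only [mul_comm] at h ⊢
  rw [h]



lemma ibp_iter : ∀ (r k : ℕ) (g : Polynomial ℝ),
    ∫ x in (0:ℝ)..1, (derivative^[k + r] (w (k + r))).eval x * g.eval x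
      = (-1:ℝ)^r * ∫ x in (0:ℝ)..1,
          (derivative^[k] (w (k + r))).eval x * (derivative^[r] g).eval x := by
  intro r
  induction r with
  | zero => intro k g; simp
  | succ r ih =>
    intro k g
    have h1 : k + (r + 1) = (k + 1) + r := by ring
    rw [h1]
    rw [ih (k + 1) g]
    have h2 : derivative^[k+1] (w (k + 1 + r)) = derivative (derivative^[k] (w (k+1+r))) :=
      Function.iterate_succ_apply' _ _ _
    rw [h2, ibp (derivative^[k] (w (k+1+r))) (derivative^[r] g)]
    have hb := boundary_zero (n := k + 1 + r) (j := k) (by omega)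
    rw [hb.1, hb.2]
    have h3 : derivative (derivative^[r] g) = derivative^[r+1] g :=
      (Function.iterate_succ_apply' _ _ _).symm
    rw [h3]
    ring

lemma moment_zero {n m : ℕ} (h : m < n) :
    ∫ x in (0:ℝ)..1, (derivative^[n] (w n)).eval x * x ^ m = 0 := by
  have h0 := ibp_iter n 0 (X ^ m)
  simp only [zero_add] at h0
  have hz : derivative^[n] ((X : Polynomial ℝ) ^ m) = 0 :=
    iterate_derivative_eq_zero (by simpa using h)
  rw [hz] at h0
  simpa using h0


lemma wnatdeg (n : ℕ) : (w n).natDegree ≤ 2 * n := by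
  rw [wdef]
  have h2 : (((X : Polynomial ℝ) - C 1) ^ n).natDegree ≤ n := by
    rw [natDegree_pow, natDegree_X_sub_C]; omega
  have h1 : ((X : Polynomial ℝ) ^ n).natDegree = n := natDegree_X_pow n
  have := natDegree_mul_le (p := (X : Polynomial ℝ) ^ n) (q := ((X : Polynomial ℝ) - C 1) ^ n)
  omega

lemma weval_one (n : ℕ) : (derivative^[n] (w n)).eval 1 = n.factorial := by
  rw [wdef, iterate_derivative_mul, eval_finset_sum]
  rw [Finset.sum_eq_single n]
  · rw [Nat.sub_self, Nat.choose_self, one_smul, Function.iterate_zero_apply,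
      iterate_derivative_X_sub_pow_self, eval_mul]
    simp
  · intro k hk hkn
    rw [iterate_derivative_X_sub_pow]
    simp only [nsmul_eq_mul, eval_mul, eval_natCast, eval_smul, eval_pow, eval_sub,
      eval_X, eval_C, sub_self, smul_eq_mul]
    rw [zero_pow (by simp only [Finset.mem_range] at hk; omega)]
    ring
  · intro hn; exact absurd (Finset.self_mem_range_succ n) hn

lemma weval_zero (n : ℕ) : (derivative^[n] (w n)).eval 0 = (-1:ℝ)^n * n.factorial := by
  rw [wdef, iterate_derivative_mul, eval_finset_sum]
  rw [Finset.sum_eq_single 0]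
  · rw [Nat.sub_zero, Nat.choose_zero_right, one_smul, Function.iterate_zero_apply,
      iterate_derivative_X_pow_eq_smul, Nat.sub_self, Nat.descFactorial_self, eval_mul]
    simp [mul_comm]
  · intro k hk hkn
    have hkle : k ≤ n := by simp only [Finset.mem_range] at hk; omega
    rw [iterate_derivative_X_pow_eq_smul, Nat.sub_sub_self hkle]
    simp only [nsmul_eq_mul, eval_mul, eval_natCast, eval_smul, eval_pow, eval_X, smul_eq_mul]
    rw [zero_pow hkn]
    ring
  · intro hn; exact absurd (by simp : (0:ℕ) ∈ Finset.range (n+1)) hn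

lemma weval_deriv_one (n : ℕ) :
    (derivative^[n+1] (w n)).eval 1 = ((n+1).factorial : ℝ) * n := by
  rw [wdef, iterate_derivative_mul, eval_finset_sum]
  rw [Finset.sum_eq_single n]
  · rw [show n + 1 - n = 1 by omega, iterate_derivative_X_sub_pow, Nat.sub_self, pow_zero,
      Function.iterate_one, derivative_X_pow]
    simp only [nsmul_eq_mul, eval_mul, eval_natCast, eval_smul, smul_eq_mul, eval_one,
      eval_pow, eval_X, one_pow, mul_one, eval_C]
    rw [Nat.descFactorial_self, Nat.factorial_succ]
    have hc : (n+1).choose n = n+1 := Nat.choose_succ_self_right n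
    rw [hc]
    push_cast
    ring
  · intro k hk hkn
    rw [iterate_derivative_X_sub_pow]
    rcases lt_or_gt_of_ne hkn with h | h
    · simp only [nsmul_eq_mul, eval_mul, eval_natCast, eval_smul, eval_pow, eval_sub, eval_X,
        eval_C, sub_self, smul_eq_mul]
      rw [zero_pow (by omega)]
      ring
    · have hd : n.descFactorial k = 0 := Nat.descFactorial_eq_zero_iff_lt.mpr h
      simp [hd]
  · intro hn; exact absurd (by simp : n ∈ Finset.range (n+2)) hn


noncomputable def A (q : ℕ) : Polynomial ℝ :=
  C (((q+1).factorial : ℝ))⁻¹ * derivative^[q+1] (w (q+1))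
    + C ((q.factorial : ℝ))⁻¹ * derivative^[q] (w q)

noncomputable def K (q : ℕ) : Polynomial ℝ := C (2⁻¹) * derivative (A q)

lemma hA1 (q : ℕ) : (A q).eval 1 = 2 := by
  have h1 := weval_one (q+1); have h2 := weval_one q
  simp only [A, eval_add, eval_mul, eval_C, h1, h2]
  have := q.factorial_ne_zero; have := (q+1).factorial_ne_zero
  field_simp
  norm_num

lemma hA0 (q : ℕ) : (A q).eval 0 = 0 := by
  simp only [A, eval_add, eval_mul, eval_C, weval_zero]
  have h1 : ((q+1).factorial : ℝ) ≠ 0 := by exact_mod_cast (q+1).factorial_ne_zero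
  have h2 : ((q).factorial : ℝ) ≠ 0 := by exact_mod_cast q.factorial_ne_zero
  field_simp
  ring_nf

lemma hAmom (q m : ℕ) (h : m < q) :
    ∫ x in (0:ℝ)..1, (A q).eval x * x ^ m = 0 := by
  have e : ∀ x : ℝ, (A q).eval x * x ^ m
      = (((q+1).factorial : ℝ))⁻¹ * ((derivative^[q+1] (w (q+1))).eval x * x ^ m)
        + ((q.factorial : ℝ))⁻¹ * ((derivative^[q] (w q)).eval x * x ^ m) := by
    intro x; simp only [A, eval_add, eval_mul, eval_C]; ring
  simp_rw [e]
  rw [intervalIntegral.integral_add, intervalIntegral.integral_const_mul,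
    intervalIntegral.integral_const_mul, moment_zero (by omega : m < q + 1),
    moment_zero h]
  · ring
  · exact (continuous_const.mul ((derivative^[q+1] (w (q+1))).continuous.mul
      (continuous_pow m))).intervalIntegrable _ _
  · exact (continuous_const.mul ((derivative^[q] (w q)).continuous.mul
      (continuous_pow m))).intervalIntegrable _ _

lemma hK1 (q : ℕ) : (K q).eval 1 = ((q:ℝ)+1)^2 := by
  have hd : derivative (A q)
      = C (((q+1).factorial : ℝ))⁻¹ * derivative^[q+1+1] (w (q+1))
        + C ((q.factorial : ℝ))⁻¹ * derivative^[q+1] (w q) := by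
    simp only [A, derivative_add, derivative_C_mul, Function.iterate_succ_apply']
  have h1 := weval_deriv_one (q+1); have h2 := weval_deriv_one q
  simp only [K, eval_mul, eval_C, hd, eval_add, h1, h2]
  have e1 : ((q+1+1).factorial : ℝ) = (q+1+1) * (q+1).factorial := by
    exact_mod_cast (Nat.factorial_succ (q+1))
  have e2 : ((q+1).factorial : ℝ) = (q+1) * q.factorial := by
    exact_mod_cast (Nat.factorial_succ q)
  have h3 : ((q+1).factorial : ℝ) ≠ 0 := by exact_mod_cast (q+1).factorial_ne_zero
  have h4 : ((q).factorial : ℝ) ≠ 0 := by exact_mod_cast q.factorial_ne_zero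
  rw [e1, e2]
  field_simp
  push_cast
  ring

lemma hKmom (q j : ℕ) (h : j ≤ q) :
    ∫ x in (0:ℝ)..1, (K q).eval x * x ^ j = 1 := by
  have e : ∀ x : ℝ, (K q).eval x * x ^ j
      = 2⁻¹ * ((derivative (A q)).eval x * (X ^ j : Polynomial ℝ).eval x) := by
    intro x; simp only [K, eval_mul, eval_C, eval_pow, eval_X]; ring
  simp_rw [e]
  rw [intervalIntegral.integral_const_mul, ibp (A q) (X ^ j)]
  rcases Nat.eq_zero_or_pos j with rfl | hj
  · simp [hA1, hA0]
  · have hb : ∫ x in (0:ℝ)..1, (A q).eval x * (derivative (X ^ j : Polynomial ℝ)).eval x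
        = 0 := by
      have e2 : ∀ x : ℝ, (A q).eval x * (derivative (X ^ j : Polynomial ℝ)).eval x
          = (j : ℝ) * ((A q).eval x * x ^ (j-1)) := by
        intro x
        rw [derivative_X_pow]
        simp only [eval_mul, eval_C, eval_pow, eval_X]
        ring
      simp_rw [e2]
      rw [intervalIntegral.integral_const_mul, hAmom q (j-1) (by omega)]
      ring
    rw [hb, hA1, hA0]
    simp only [eval_pow, eval_X, one_pow]
    rw [zero_pow (by omega : j ≠ 0)]
    ring

lemma hKdeg (q : ℕ) : (K q).natDegree ≤ q := by
  have h1 : (derivative^[q+1] (w (q+1))).natDegree ≤ q + 1 := by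
    have := natDegree_iterate_derivative (w (q+1)) (q+1)
    have := wnatdeg (q+1)
    omega
  have h2 : (derivative^[q] (w q)).natDegree ≤ q := by
    have := natDegree_iterate_derivative (w q) q
    have := wnatdeg q
    omega
  have hA : (A q).natDegree ≤ q + 1 := by
    refine (natDegree_add_le _ _).trans ?_
    have a1 := (natDegree_C_mul_le (((q+1).factorial : ℝ))⁻¹ (derivative^[q+1] (w (q+1))))
    have a2 := (natDegree_C_mul_le ((q.factorial : ℝ))⁻¹ (derivative^[q] (w q)))
    omega
  have := natDegree_C_mul_le (2⁻¹ : ℝ) (derivative (A q))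
  have := natDegree_derivative_le (A q)
  simp only [K]
  omega

lemma reproducing (q : ℕ) (P : Polynomial ℝ) (hP : P.natDegree ≤ q) :
    ∫ x in (0:ℝ)..1, (K q).eval x * P.eval x = P.eval 1 := by
  have hP' : P.natDegree < q + 1 := by omega
  have e : ∀ x : ℝ, (K q).eval x * P.eval x
      = ∑ i ∈ Finset.range (q+1), P.coeff i * ((K q).eval x * x ^ i) := by
    intro x
    rw [eval_eq_sum_range' hP' x, Finset.mul_sum]
    exact Finset.sum_congr rfl fun i _ => by ring
  simp_rw [e]
  rw [intervalIntegral.integral_finset_sum]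
  · have : ∀ i ∈ Finset.range (q+1),
        (∫ x in (0:ℝ)..1, P.coeff i * ((K q).eval x * x ^ i)) = P.coeff i := by
      intro i hi
      rw [intervalIntegral.integral_const_mul, hKmom q i (by simp at hi; omega), mul_one]
    rw [Finset.sum_congr rfl this, eval_eq_sum_range' hP' 1]
    exact Finset.sum_congr rfl fun i _ => by rw [one_pow, mul_one]
  · intro i _
    exact (continuous_const.mul ((K q).continuous.mul (continuous_pow i))).intervalIntegrable _ _

lemma endpoint (q : ℕ) (p : Polynomial ℝ) (hdeg : p.natDegree ≤ q) :
    (p.eval 1)^2 ≤ ((q:ℝ)+1)^2 * ∫ x in (0:ℝ)..1, (p.eval x)^2 := by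
  set I2 := ∫ x in (0:ℝ)..1, (p.eval x)^2 with hI2
  have hquad : ∀ lam : ℝ,
      0 ≤ I2 * (lam * lam) + (2 * p.eval 1) * lam + ((q:ℝ)+1)^2 := by
    intro lam
    have hnn : 0 ≤ ∫ x in (0:ℝ)..1, (lam * p.eval x + (K q).eval x)^2 :=
      intervalIntegral.integral_nonneg (by norm_num) (fun x _ => sq_nonneg _)
    have e : ∀ x : ℝ, (lam * p.eval x + (K q).eval x)^2
        = (lam * lam) * (p.eval x)^2 + (2 * lam) * ((K q).eval x * p.eval x)
          + ((K q).eval x)^2 := by intro x; ring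
    rw [intervalIntegral.integral_congr (g := fun x =>
      (lam * lam) * (p.eval x)^2 + (2 * lam) * ((K q).eval x * p.eval x)
        + ((K q).eval x)^2) (fun x _ => e x)] at hnn
    rw [intervalIntegral.integral_add, intervalIntegral.integral_add,
      intervalIntegral.integral_const_mul, intervalIntegral.integral_const_mul,
      reproducing q p hdeg] at hnn
    · have hnorm : ∫ x in (0:ℝ)..1, ((K q).eval x)^2 = ((q:ℝ)+1)^2 := by
        simp_rw [pow_two]
        rw [reproducing q (K q) (hKdeg q), hK1]
        ring
      rw [hnorm] at hnn
      linarith [hnn]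
    · exact (continuous_const.mul (p.continuous.pow 2)).intervalIntegrable _ _
    · exact (continuous_const.mul ((K q).continuous.mul p.continuous)).intervalIntegrable _ _
    · exact ((continuous_const.mul (p.continuous.pow 2)).add
        (continuous_const.mul ((K q).continuous.mul p.continuous))).intervalIntegrable _ _
    · exact ((K q).continuous.pow 2).intervalIntegrable _ _
  have hd := discrim_le_zero hquad
  rw [discrim] at hd
  nlinarith [hd]


lemma affine (q : ℕ) (p : Polynomial ℝ) (hdeg : p.natDegree ≤ q) (u v : ℝ) (huv : u ≠ v) :
    (p.eval v)^2 ≤ ((q:ℝ)+1)^2 * ((v - u)⁻¹ * ∫ x in u..v, (p.eval x)^2) := by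
  have hvu : v - u ≠ 0 := sub_ne_zero.mpr (Ne.symm huv)
  set P := p.comp (C (v - u) * X + C u) with hP
  have hPdeg : P.natDegree ≤ q := by
    rw [hP, natDegree_comp, natDegree_linear hvu]
    omega
  have hPeval : ∀ x : ℝ, P.eval x = p.eval ((v - u) * x + u) := by
    intro x; simp [hP, eval_comp]
  have hcomp := intervalIntegral.integral_comp_mul_add (a := (0:ℝ)) (b := 1)
    (f := fun y => (p.eval y)^2) hvu u
  have hint : ∫ x in (0:ℝ)..1, (P.eval x)^2 = (v - u)⁻¹ * ∫ x in u..v, (p.eval x)^2 := by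
    simp_rw [hPeval]
    rw [hcomp, show (v - u) * 0 + u = u by ring, show (v - u) * 1 + u = v by ring,
      smul_eq_mul]
  have h := endpoint q P hPdeg
  rw [hPeval 1, show (v - u) * 1 + u = v by ring, hint] at h
  exact h


end PolySupL2


/-- For every polynomial `p` of degree at most `q`,
`sup_{t ∈ [a,b]} |p(t)| ≤ (q+1) (b−a)^{−1/2} (∫_a^b p(t)² dt)^{1/2}`. -/
theorem polynomial_sup_le_L2 (q : ℕ) (a b : ℝ) (hab : a < b)
    (p : Polynomial ℝ) (hdeg : p.natDegree ≤ q) :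
    ∀ t ∈ Set.Icc a b, |p.eval t| ≤
      ((q : ℝ) + 1) * (Real.sqrt (b - a))⁻¹ *
        Real.sqrt (∫ s in Set.Ioo a b, (p.eval s) ^ 2) := by
  intro t ht
  obtain ⟨hat, htb⟩ := ht
  have hIeq : (∫ s in Set.Ioo a b, (p.eval s)^2) = ∫ x in a..b, (p.eval x)^2 := by
    rw [intervalIntegral.integral_of_le hab.le, integral_Ioc_eq_integral_Ioo]
  rw [hIeq]
  set I := ∫ x in a..b, (p.eval x)^2 with hI
  have hint : ∀ u v : ℝ, IntervalIntegrable (fun x => (p.eval x)^2) volume u v :=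
    fun u v => (p.continuous.pow 2).intervalIntegrable u v
  have hS1 : (p.eval t)^2 * (t - a) ≤ ((q:ℝ)+1)^2 * ∫ x in a..t, (p.eval x)^2 := by
    rcases eq_or_ne t a with rfl | hta
    · simp
    · have h := PolySupL2.affine q p hdeg a t (Ne.symm hta)
      have hpos : 0 < t - a := sub_pos.mpr (lt_of_le_of_ne hat (Ne.symm hta))
      have h2 := mul_le_mul_of_nonneg_right h hpos.le
      have e : ((q:ℝ)+1)^2 * ((t-a)⁻¹ * ∫ x in a..t, (p.eval x)^2) * (t-a)
          = ((q:ℝ)+1)^2 * ∫ x in a..t, (p.eval x)^2 := by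
        field_simp
      rwa [e] at h2
  have hS2 : (p.eval t)^2 * (b - t) ≤ ((q:ℝ)+1)^2 * ∫ x in t..b, (p.eval x)^2 := by
    rcases eq_or_ne t b with rfl | htb'
    · simp
    · have h := PolySupL2.affine q p hdeg b t (Ne.symm htb')
      have he : (t-b)⁻¹ * ∫ x in b..t, (p.eval x)^2
          = (b-t)⁻¹ * ∫ x in t..b, (p.eval x)^2 := by
        rw [intervalIntegral.integral_symm, show (t-b)⁻¹ = -(b-t)⁻¹ by
          rw [← neg_sub b t, inv_neg]]
        ring
      rw [he] at h
      have hpos : 0 < b - t := sub_pos.mpr (lt_of_le_of_ne htb htb')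
      have h2 := mul_le_mul_of_nonneg_right h hpos.le
      have e : ((q:ℝ)+1)^2 * ((b-t)⁻¹ * ∫ x in t..b, (p.eval x)^2) * (b-t)
          = ((q:ℝ)+1)^2 * ∫ x in t..b, (p.eval x)^2 := by
        field_simp
      rwa [e] at h2
  have hadj := intervalIntegral.integral_add_adjacent_intervals (hint a t) (hint t b)
  have hsum : (p.eval t)^2 * (b - a) ≤ ((q:ℝ)+1)^2 * I := by
    have e : (p.eval t)^2 * (b - a) = (p.eval t)^2 * (t-a) + (p.eval t)^2 * (b-t) := by
      ring
    have e2 : ((q:ℝ)+1)^2 * (∫ x in a..t, (p.eval x)^2)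
        + ((q:ℝ)+1)^2 * (∫ x in t..b, (p.eval x)^2) = ((q:ℝ)+1)^2 * I := by
      rw [← mul_add, hadj]
    rw [e]
    linarith
  have hInn : 0 ≤ I := intervalIntegral.integral_nonneg hab.le (fun x _ => sq_nonneg _)
  have hba : 0 < b - a := sub_pos.mpr hab
  have hfin : (p.eval t)^2 ≤ (((q:ℝ)+1) * (Real.sqrt (b-a))⁻¹ * Real.sqrt I)^2 := by
    have e : (((q:ℝ)+1) * (Real.sqrt (b-a))⁻¹ * Real.sqrt I)^2
        = ((q:ℝ)+1)^2 * ((b-a)⁻¹ * I) := by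
      rw [mul_pow, mul_pow, ← Real.sqrt_inv, Real.sq_sqrt (by positivity),
        Real.sq_sqrt hInn]
      ring
    rw [e]
    rw [show ((q:ℝ)+1)^2 * ((b-a)⁻¹ * I) = ((q:ℝ)+1)^2 * I / (b-a) by ring]
    exact (le_div_iff₀ hba).mpr hsum
  calc |p.eval t| = Real.sqrt ((p.eval t)^2) := (Real.sqrt_sq_eq_abs _).symm
    _ ≤ Real.sqrt ((((q:ℝ)+1) * (Real.sqrt (b-a))⁻¹ * Real.sqrt I)^2) :=
        Real.sqrt_le_sqrt hfin
    _ = ((q:ℝ)+1) * (Real.sqrt (b-a))⁻¹ * Real.sqrt I := Real.sqrt_sq (by positivity)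
end

section
/- For every integer q ≥ 0 and every exponent r ∈ [1, ∞], there exists a constant C > 0, depending only on q and r, such that for all real numbers a < b and every real polynomial p of degree at most q, the L^r(a, b) norm of the derivative p' satisfies ‖p'‖_{L^r(a,b)} ≤ C·(b − a)^{−1}·‖p‖_{L^r(a,b)}. -/
open MeasureTheory
open scoped ENNReal

namespace PolyInvAux

open Polynomial

/-- The `L¹(0,1)` norm of the polynomial with coefficient vector `v`. -/
noncomputable def g (q : ℕ) (v : Fin (q + 1) → ℝ) : ℝ :=
  ∫ u in (0:ℝ)..1, |∑ i : Fin (q + 1), v i * u ^ (i : ℕ)|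

lemma continuous_inner (q : ℕ) (v : Fin (q + 1) → ℝ) :
    Continuous fun u : ℝ => ∑ i : Fin (q + 1), v i * u ^ (i : ℕ) := by
  fun_prop

lemma intervalIntegrable_inner (q : ℕ) (v : Fin (q + 1) → ℝ) :
    IntervalIntegrable (fun u : ℝ => |∑ i : Fin (q + 1), v i * u ^ (i : ℕ)|)
      volume 0 1 :=
  ((continuous_inner q v).abs).intervalIntegrable 0 1

lemma g_nonneg (q : ℕ) (v : Fin (q + 1) → ℝ) : 0 ≤ g q v := by
  apply intervalIntegral.integral_nonneg (by norm_num)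
  intro u _; exact abs_nonneg _

lemma g_lipschitz (q : ℕ) : LipschitzWith (q + 1) (g q) := by
  apply LipschitzWith.of_dist_le_mul
  intro v w
  have hint := intervalIntegrable_inner q v
  have hintw := intervalIntegrable_inner q w
  rw [dist_eq_norm, dist_eq_norm, Real.norm_eq_abs]
  push_cast
  have h1 : g q v - g q w
      = ∫ u in (0:ℝ)..1, (|∑ i : Fin (q + 1), v i * u ^ (i : ℕ)|
        - |∑ i : Fin (q + 1), w i * u ^ (i : ℕ)|) := by
    rw [intervalIntegral.integral_sub hint hintw]; rfl
  rw [h1]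
  have h2 : ∀ u ∈ Set.Icc (0:ℝ) 1,
      ‖(|∑ i : Fin (q + 1), v i * u ^ (i : ℕ)| - |∑ i : Fin (q + 1), w i * u ^ (i : ℕ)|)‖
        ≤ (q + 1) * ‖v - w‖ := by
    intro u hu
    rw [Real.norm_eq_abs]
    refine le_trans (abs_abs_sub_abs_le_abs_sub _ _) ?_
    rw [← Finset.sum_sub_distrib]
    refine le_trans (Finset.abs_sum_le_sum_abs _ _) ?_
    have : ∀ i : Fin (q + 1), |v i * u ^ (i:ℕ) - w i * u ^ (i:ℕ)| ≤ ‖v - w‖ := by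
      intro i
      rw [← sub_mul, abs_mul]
      calc |v i - w i| * |u ^ (i:ℕ)| ≤ ‖v - w‖ * 1 := by
            apply mul_le_mul
            · have := norm_le_pi_norm (v - w) i
              simpa [Real.norm_eq_abs] using this
            · rw [abs_pow]
              exact pow_le_one₀ (abs_nonneg u) (abs_le.2 ⟨by linarith [hu.1], hu.2⟩)
            · exact abs_nonneg _
            · exact norm_nonneg _
        _ = ‖v - w‖ := mul_one _
    calc ∑ i : Fin (q + 1), |v i * u ^ (i:ℕ) - w i * u ^ (i:ℕ)|
        ≤ ∑ _i : Fin (q + 1), ‖v - w‖ := Finset.sum_le_sum (fun i _ => this i)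
      _ = (q + 1) * ‖v - w‖ := by simp [mul_comm]
  calc |∫ u in (0:ℝ)..1, (|∑ i : Fin (q + 1), v i * u ^ (i : ℕ)|
        - |∑ i : Fin (q + 1), w i * u ^ (i : ℕ)|)|
      ≤ ∫ u in (0:ℝ)..1, ‖(|∑ i : Fin (q + 1), v i * u ^ (i : ℕ)|
        - |∑ i : Fin (q + 1), w i * u ^ (i : ℕ)|)‖ := by
        have := intervalIntegral.norm_integral_le_integral_norm
          (f := fun u : ℝ => (|∑ i : Fin (q + 1), v i * u ^ (i : ℕ)|
            - |∑ i : Fin (q + 1), w i * u ^ (i : ℕ)|)) (μ := volume) (zero_le_one)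
        simpa [Real.norm_eq_abs] using this
    _ ≤ ∫ u in (0:ℝ)..1, ((q : ℝ) + 1) * ‖v - w‖ := by
        apply intervalIntegral.integral_mono_on zero_le_one _ _ h2
        · exact (hint.sub hintw).norm
        · exact intervalIntegrable_const
    _ = ((q:ℝ) + 1) * ‖v - w‖ := by simp

lemma g_continuous (q : ℕ) : Continuous (g q) := (g_lipschitz q).continuous

/-- positivity of `g` on nonzero vectors -/
lemma g_pos (q : ℕ) (v : Fin (q + 1) → ℝ) (hv : v ≠ 0) : 0 < g q v := by
  classical
  set P : Polynomial ℝ := ∑ i : Fin (q + 1), Polynomial.C (v i) * Polynomial.X ^ (i : ℕ)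
    with hP
  have hcoeff : ∀ j : Fin (q + 1), P.coeff (j : ℕ) = v j := by
    intro j
    rw [hP, Polynomial.finset_sum_coeff]
    simp only [Polynomial.coeff_C_mul, Polynomial.coeff_X_pow]
    rw [Finset.sum_eq_single j]
    · simp
    · intro i _ hij
      have hne : (i : ℕ) ≠ (j : ℕ) := fun h => hij (Fin.ext h)
      simp [hne.symm]
    · simp
  have hPne : P ≠ 0 := by
    obtain ⟨j, hj⟩ := Function.ne_iff.1 hv
    intro h
    apply hj
    have h2 := hcoeff j
    rw [h] at h2
    simpa using h2.symm
  have heval : ∀ u : ℝ, P.eval u = ∑ i : Fin (q + 1), v i * u ^ (i : ℕ) := by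
    intro u; rw [hP]; simp [Polynomial.eval_finset_sum]
  have hroots : Set.Finite {u : ℝ | P.IsRoot u} := Polynomial.finite_setOf_isRoot hPne
  rw [g, intervalIntegral.integral_of_le zero_le_one]
  rw [setIntegral_pos_iff_support_of_nonneg_ae
    (Filter.Eventually.of_forall fun u => abs_nonneg _)
    (((continuous_inner q v).abs).integrableOn_Ioc)]
  have hsub : Set.Ioc (0:ℝ) 1 \ {u : ℝ | P.IsRoot u} ⊆
      (Function.support fun u => |∑ i : Fin (q + 1), v i * u ^ (i : ℕ)|) ∩ Set.Ioc 0 1 := by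
    rintro u ⟨hu1, hu2⟩
    refine ⟨?_, hu1⟩
    simp only [Function.mem_support, abs_ne_zero]
    rw [← heval u]
    exact hu2
  refine lt_of_lt_of_le ?_ (measure_mono hsub)
  rw [measure_diff_null (hroots.measure_zero _)]
  simp [Real.volume_Ioc]

lemma exists_c (q : ℕ) : ∃ c : ℝ, 0 < c ∧ ∀ v : Fin (q + 1) → ℝ, c * ‖v‖ ≤ g q v := by
  obtain ⟨v₀, hv₀, hmin⟩ := (isCompact_sphere (0 : Fin (q + 1) → ℝ) 1).exists_isMinOn
    (NormedSpace.sphere_nonempty.2 zero_le_one) ((g_continuous q).continuousOn)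
  have hv₀ne : v₀ ≠ 0 := by
    intro h
    rw [h] at hv₀
    simp at hv₀
  refine ⟨g q v₀, g_pos q v₀ hv₀ne, ?_⟩
  intro v
  by_cases hv : v = 0
  · simp [hv, g]
  · have hnv : 0 < ‖v‖ := norm_pos_iff.2 hv
    set w : Fin (q + 1) → ℝ := ‖v‖⁻¹ • v with hw
    have hwmem : w ∈ Metric.sphere (0 : Fin (q + 1) → ℝ) 1 := by
      simp only [mem_sphere_iff_norm, sub_zero, hw, norm_smul, norm_inv, norm_norm]
      exact inv_mul_cancel₀ hnv.ne'
    have habs : ∀ u : ℝ, |∑ i : Fin (q + 1), v i * u ^ (i : ℕ)|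
        = ‖v‖ * |∑ i : Fin (q + 1), w i * u ^ (i : ℕ)| := by
      intro u
      have hsum : ‖v‖ * ∑ i : Fin (q + 1), w i * u ^ (i : ℕ)
          = ∑ i : Fin (q + 1), v i * u ^ (i : ℕ) := by
        rw [Finset.mul_sum]
        refine Finset.sum_congr rfl fun i _ => ?_
        have hwi : w i = ‖v‖⁻¹ * v i := rfl
        rw [hwi]
        field_simp
      rw [← hsum, abs_mul, abs_of_pos hnv]
    have hgv : g q v = ‖v‖ * g q w := by
      rw [g, g, ← intervalIntegral.integral_const_mul]
      exact intervalIntegral.integral_congr fun u _ => habs u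
    rw [hgv, mul_comm (g q v₀) ‖v‖]
    exact mul_le_mul_of_nonneg_left (hmin hwmem) hnv.le

lemma key (q : ℕ) : ∃ C : ℝ, 0 < C ∧ ∀ p : Polynomial ℝ, p.natDegree ≤ q →
    ∀ s ∈ Set.Icc (0:ℝ) 1,
      |(Polynomial.derivative p).eval s| ≤ C * ∫ u in (0:ℝ)..1, |p.eval u| := by
  obtain ⟨c, hc, hcle⟩ := exists_c q
  refine ⟨((q : ℝ) + 1) ^ 2 / c, by positivity, ?_⟩
  intro p hp s hs
  set v : Fin (q + 1) → ℝ := fun i => p.coeff i with hv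
  have hg : g q v = ∫ u in (0:ℝ)..1, |p.eval u| := by
    rw [g]
    refine intervalIntegral.integral_congr fun u _ => ?_
    congr 1
    rw [Polynomial.eval_eq_sum_range' (Nat.lt_succ_of_le hp)]
    exact Fin.sum_univ_eq_sum_range (fun j : ℕ => p.coeff j * u ^ j) (q + 1)
  have hgnn : 0 ≤ g q v := g_nonneg q v
  have hnorm : ‖v‖ ≤ g q v / c := by
    rw [le_div_iff₀ hc, mul_comm]
    exact hcle v
  have hd : (Polynomial.derivative p).natDegree < q + 1 :=
    Nat.lt_succ_of_le (((Polynomial.natDegree_derivative_le p).trans (Nat.sub_le _ 1)).trans hp)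
  rw [Polynomial.eval_eq_sum_range' hd s]
  have hs1 : |s| ≤ 1 := abs_le.2 ⟨by linarith [hs.1], hs.2⟩
  calc |∑ i ∈ Finset.range (q + 1), (Polynomial.derivative p).coeff i * s ^ i|
      ≤ ∑ i ∈ Finset.range (q + 1), |(Polynomial.derivative p).coeff i * s ^ i| :=
        Finset.abs_sum_le_sum_abs _ _
    _ ≤ ∑ _i ∈ Finset.range (q + 1), ((q : ℝ) + 1) * (g q v / c) := by
        refine Finset.sum_le_sum fun i hi => ?_
        rw [abs_mul]
        have hsp : |s ^ i| ≤ 1 := by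
          rw [abs_pow]; exact pow_le_one₀ (abs_nonneg s) hs1
        have hcoeffb : |(Polynomial.derivative p).coeff i|
            ≤ ((q : ℝ) + 1) * (g q v / c) := by
          rw [Polynomial.coeff_derivative]
          by_cases h : i + 1 ≤ q
          · have h1 : |p.coeff (i + 1)| ≤ ‖v‖ := by
              have := norm_le_pi_norm v ⟨i + 1, Nat.lt_succ_of_le h⟩
              simpa [Real.norm_eq_abs, hv] using this
            have h2 : |p.coeff (i + 1)| ≤ g q v / c := h1.trans hnorm
            have h3 : |(i : ℝ) + 1| ≤ (q : ℝ) + 1 := by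
              rw [abs_of_nonneg (by positivity)]
              have : i < q + 1 := Finset.mem_range.1 hi
              have : (i : ℝ) ≤ q := by exact_mod_cast Nat.lt_succ_iff.1 this
              linarith
            rw [abs_mul]
            calc |p.coeff (i + 1)| * |(i : ℝ) + 1|
                ≤ (g q v / c) * ((q : ℝ) + 1) :=
                  mul_le_mul h2 h3 (abs_nonneg _) (by positivity)
              _ = ((q : ℝ) + 1) * (g q v / c) := by ring
          · have hz : p.coeff (i + 1) = 0 :=
              Polynomial.coeff_eq_zero_of_natDegree_lt (by omega)
            rw [hz]
            simp
            positivity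
        calc |(Polynomial.derivative p).coeff i| * |s ^ i|
            ≤ |(Polynomial.derivative p).coeff i| * 1 :=
              mul_le_mul_of_nonneg_left hsp (abs_nonneg _)
          _ = |(Polynomial.derivative p).coeff i| := mul_one _
          _ ≤ ((q : ℝ) + 1) * (g q v / c) := hcoeffb
    _ = ((q : ℝ) + 1) ^ 2 / c * ∫ u in (0:ℝ)..1, |p.eval u| := by
        rw [Finset.sum_const, Finset.card_range, nsmul_eq_mul, ← hg]
        push_cast
        ring

lemma key2 (q : ℕ) : ∃ C : ℝ, 0 < C ∧ ∀ a b : ℝ, a < b → ∀ p : Polynomial ℝ,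
    p.natDegree ≤ q → ∀ t ∈ Set.Ioo a b,
      |(Polynomial.derivative p).eval t|
        ≤ C * ((b - a)⁻¹ * (b - a)⁻¹) * ∫ u in a..b, |p.eval u| := by
  obtain ⟨C, hC, hkey⟩ := key q
  refine ⟨C, hC, ?_⟩
  intro a b hab p hp t ht
  set L : ℝ := b - a with hL
  have hL0 : 0 < L := by rw [hL]; linarith
  set φ : Polynomial ℝ := Polynomial.C L * Polynomial.X + Polynomial.C a with hφ
  set P : Polynomial ℝ := p.comp φ with hPdef
  have hφdeg : φ.natDegree = 1 := Polynomial.natDegree_linear hL0.ne'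
  have hPdeg : P.natDegree ≤ q := by
    rw [hPdef, Polynomial.natDegree_comp, hφdeg, mul_one]; exact hp
  have hφeval : ∀ u : ℝ, φ.eval u = L * u + a := by intro u; simp [hφ]
  have hPeval : ∀ u : ℝ, P.eval u = p.eval (L * u + a) := by
    intro u; rw [hPdef, Polynomial.eval_comp, hφeval]
  have hdφ : Polynomial.derivative φ = Polynomial.C L := by
    simp [hφ]
  have hdP : ∀ u : ℝ, (Polynomial.derivative P).eval u
      = L * (Polynomial.derivative p).eval (L * u + a) := by
    intro u
    rw [hPdef, Polynomial.derivative_comp, hdφ]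
    simp [hφeval]
  set s : ℝ := (t - a) / L with hs
  have hsmem : s ∈ Set.Icc (0:ℝ) 1 :=
    ⟨div_nonneg (by linarith [ht.1]) hL0.le, (div_le_one hL0).2 (by linarith [ht.2])⟩
  have hts : L * s + a = t := by
    rw [hs]; field_simp; ring
  have h1 := hkey P hPdeg s hsmem
  rw [hdP, hts] at h1
  have h2 : ∫ u in (0:ℝ)..1, |P.eval u| = L⁻¹ * ∫ x in a..b, |p.eval x| := by
    have h3 := intervalIntegral.integral_comp_mul_add (f := fun x => |p.eval x|)
      (a := (0:ℝ)) (b := 1) hL0.ne' a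
    have h4 : (fun u : ℝ => |P.eval u|) = fun u : ℝ => |p.eval (L * u + a)| := by
      funext u; rw [hPeval]
    rw [h4, h3]
    have e1 : L * 0 + a = a := by ring
    have e2 : L * 1 + a = b := by rw [hL]; ring
    rw [e1, e2, smul_eq_mul]
  rw [h2] at h1
  rw [abs_mul, abs_of_pos hL0] at h1
  have h5 : |(Polynomial.derivative p).eval t|
      = L⁻¹ * (L * |(Polynomial.derivative p).eval t|) := by
    field_simp
  rw [h5]
  calc L⁻¹ * (L * |(Polynomial.derivative p).eval t|)
      ≤ L⁻¹ * (C * (L⁻¹ * ∫ x in a..b, |p.eval x|)) :=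
        mul_le_mul_of_nonneg_left h1 (inv_nonneg.2 hL0.le)
    _ = C * (L⁻¹ * L⁻¹) * ∫ x in a..b, |p.eval x| := by ring

end PolyInvAux

/-- Inverse estimate: for every `q ≥ 0` and `r ∈ [1, ∞]` there is a constant `C > 0`,
depending only on `q` and `r`, such that for all `a < b` and every real polynomial `p` of
degree at most `q`, `‖p'‖_{L^r(a,b)} ≤ C (b−a)⁻¹ ‖p‖_{L^r(a,b)}`. -/
theorem polynomial_inverse_estimate (q : ℕ) (r : ℝ≥0∞) (hr : 1 ≤ r) :
    ∃ C : ℝ, 0 < C ∧ ∀ a b : ℝ, a < b → ∀ p : Polynomial ℝ, p.natDegree ≤ q →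
      eLpNorm (fun t => (Polynomial.derivative p).eval t) r
          (volume.restrict (Set.Ioo a b)) ≤
        ENNReal.ofReal (C * (b - a)⁻¹) *
          eLpNorm (fun t => p.eval t) r (volume.restrict (Set.Ioo a b)) := by
  obtain ⟨C, hC, hkey⟩ := PolyInvAux.key2 q
  refine ⟨C, hC, ?_⟩
  intro a b hab p hp
  set μ := volume.restrict (Set.Ioo a b) with hμ
  set L : ℝ := b - a with hL
  have hL0 : 0 < L := by rw [hL]; linarith
  have hμuniv : μ Set.univ = ENNReal.ofReal L := by
    rw [hμ, Measure.restrict_apply_univ, Real.volume_Ioo]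
  have hcontp : Continuous fun t : ℝ => p.eval t := Polynomial.continuous p
  have hcontp' : Continuous fun t : ℝ => (Polynomial.derivative p).eval t :=
    Polynomial.continuous _
  set I : ℝ := ∫ x in a..b, |p.eval x| with hI
  have hInn : 0 ≤ I :=
    intervalIntegral.integral_nonneg hab.le (fun u _ => abs_nonneg _)
  have hA : eLpNorm (fun t => (Polynomial.derivative p).eval t) r μ
      ≤ eLpNorm (fun t => (Polynomial.derivative p).eval t) ∞ μ
        * μ Set.univ ^ (1 / r.toReal) := by
    have h := eLpNorm_le_eLpNorm_mul_rpow_measure_univ (p := r) (q := ∞) le_top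
      hcontp'.aestronglyMeasurable (μ := μ)
    simpa using h
  have hB : eLpNorm (fun t => (Polynomial.derivative p).eval t) ∞ μ
      ≤ ENNReal.ofReal (C * (L⁻¹ * L⁻¹) * I) := by
    rw [eLpNorm_exponent_top]
    apply eLpNormEssSup_le_of_ae_bound (C := C * (L⁻¹ * L⁻¹) * I)
    rw [hμ, ae_restrict_iff' measurableSet_Ioo]
    refine Filter.Eventually.of_forall fun t ht => ?_
    rw [Real.norm_eq_abs]
    exact hkey a b hab p hp t ht
  have hIeq : ENNReal.ofReal I = eLpNorm (fun t => p.eval t) 1 μ := by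
    rw [eLpNorm_one_eq_lintegral_enorm, hI, intervalIntegral.integral_of_le hab.le,
      integral_Ioc_eq_integral_Ioo, hμ]
    rw [MeasureTheory.ofReal_integral_eq_lintegral_ofReal]
    · refine lintegral_congr fun x => ?_
      rw [← Real.norm_eq_abs, ofReal_norm]
    · exact (hcontp.abs.integrableOn_Icc).mono_set Set.Ioo_subset_Icc_self
    · exact Filter.Eventually.of_forall fun x => abs_nonneg _
  have hD : eLpNorm (fun t => p.eval t) 1 μ
      ≤ eLpNorm (fun t => p.eval t) r μ * μ Set.univ ^ (1 - 1 / r.toReal) := by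
    have h := eLpNorm_le_eLpNorm_mul_rpow_measure_univ (p := 1) (q := r) hr
      hcontp.aestronglyMeasurable (μ := μ)
    simpa using h
  calc eLpNorm (fun t => (Polynomial.derivative p).eval t) r μ
      ≤ eLpNorm (fun t => (Polynomial.derivative p).eval t) ∞ μ
        * μ Set.univ ^ (1 / r.toReal) := hA
    _ ≤ ENNReal.ofReal (C * (L⁻¹ * L⁻¹) * I) * μ Set.univ ^ (1 / r.toReal) :=
        mul_le_mul_left hB _
    _ = ENNReal.ofReal (C * (L⁻¹ * L⁻¹)) * ENNReal.ofReal I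
        * μ Set.univ ^ (1 / r.toReal) := by
        rw [ENNReal.ofReal_mul (by positivity)]
    _ = ENNReal.ofReal (C * (L⁻¹ * L⁻¹)) * eLpNorm (fun t => p.eval t) 1 μ
        * μ Set.univ ^ (1 / r.toReal) := by rw [hIeq]
    _ ≤ ENNReal.ofReal (C * (L⁻¹ * L⁻¹))
        * (eLpNorm (fun t => p.eval t) r μ * μ Set.univ ^ (1 - 1 / r.toReal))
        * μ Set.univ ^ (1 / r.toReal) :=
        mul_le_mul_left (mul_le_mul_right hD _) _
    _ = ENNReal.ofReal (C * (L⁻¹ * L⁻¹))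
        * (μ Set.univ ^ (1 - 1 / r.toReal) * μ Set.univ ^ (1 / r.toReal))
        * eLpNorm (fun t => p.eval t) r μ := by ring
    _ = ENNReal.ofReal (C * L⁻¹) * eLpNorm (fun t => p.eval t) r μ := by
        rw [← ENNReal.rpow_add _ _ (by rw [hμuniv]; exact (ENNReal.ofReal_pos.2 hL0).ne')
          (by rw [hμuniv]; exact ENNReal.ofReal_ne_top)]
        rw [sub_add_cancel, ENNReal.rpow_one, hμuniv,
          ← ENNReal.ofReal_mul (by positivity)]
        congr 2
        field_simp
end

section
/- For all real numbers a < b and every continuously differentiable function f : [a, b] → ℝ, sup_{t ∈ [a, b]} |f(t)| ≤ (b − a)^{−1/2}·(∫_a^b f(t)² dt)^{1/2} + (b − a)^{1/2}·(∫_a^b f'(t)² dt)^{1/2}. -/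
open MeasureTheory

/-- Cauchy–Schwarz: `∫ |h| ≤ √(b-a) √(∫ h²)` on `(a,b)` for `h` continuous on `[a,b]`. -/
lemma cs_aux (a b : ℝ) (hab : a < b) (h : ℝ → ℝ) (hc : ContinuousOn h (Set.Icc a b)) :
    ∫ s in Set.Ioo a b, |h s| ≤
      Real.sqrt (b - a) * Real.sqrt (∫ s in Set.Ioo a b, h s ^ 2) := by
  set μ := (volume : Measure ℝ).restrict (Set.Ioo a b) with hμ
  haveI : IsFiniteMeasure μ := by
    constructor
    rw [hμ, Measure.restrict_apply_univ, Real.volume_Ioo]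
    exact ENNReal.ofReal_lt_top
  have hmeas : AEStronglyMeasurable h μ :=
    (hc.mono Set.Ioo_subset_Icc_self).aestronglyMeasurable measurableSet_Ioo
  obtain ⟨M, hM⟩ := isCompact_Icc.exists_bound_of_continuousOn hc
  have hmem : MemLp h (ENNReal.ofReal 2) μ := by
    refine MemLp.of_bound hmeas M ?_
    rw [hμ, ae_restrict_iff' measurableSet_Ioo]
    exact ae_of_all _ fun x hx => hM x (Set.Ioo_subset_Icc_self hx)
  have hpq : Real.HolderConjugate 2 2 := by
    constructor <;> norm_num
  have h1 : MemLp (fun _ : ℝ => (1 : ℝ)) (ENNReal.ofReal 2) μ := memLp_const 1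
  have key := integral_mul_le_Lp_mul_Lq_of_nonneg hpq
    (f := fun s => |h s|) (g := fun _ => (1 : ℝ))
    (ae_of_all _ fun x => abs_nonneg _) (ae_of_all _ fun _ => zero_le_one)
    (hmem.abs) h1
  simp only [mul_one] at key
  have e1 : ∫ x, |h x| ^ (2:ℝ) ∂μ = ∫ s in Set.Ioo a b, h s ^ 2 := by
    rw [hμ]
    refine setIntegral_congr_fun measurableSet_Ioo fun x _ => ?_
    rw [show ((2:ℝ)) = ((2:ℕ):ℝ) by norm_num, Real.rpow_natCast, sq_abs]
  have e2 : ∫ _x, (1:ℝ) ^ (2:ℝ) ∂μ = b - a := by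
    simp [hμ, Real.volume_Ioo, ENNReal.toReal_ofReal (le_of_lt (sub_pos.2 hab)), hab.le]
  rw [e1, e2] at key
  calc ∫ s in Set.Ioo a b, |h s| = ∫ x, |h x| ∂μ := rfl
    _ ≤ (∫ s in Set.Ioo a b, h s ^ 2) ^ (1/2:ℝ) * (b - a) ^ (1/2:ℝ) := key
    _ = Real.sqrt (b - a) * Real.sqrt (∫ s in Set.Ioo a b, h s ^ 2) := by
        rw [← Real.sqrt_eq_rpow, ← Real.sqrt_eq_rpow, mul_comm]

/-- For every continuously differentiable `f : [a, b] → ℝ`,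
`sup_{t ∈ [a,b]} |f(t)| ≤ (b−a)^{−1/2} ‖f‖_{L²(a,b)} + (b−a)^{1/2} ‖f'‖_{L²(a,b)}`. -/
theorem sup_le_L2_add_L2_deriv (a b : ℝ) (hab : a < b) (f f' : ℝ → ℝ)
    (hderiv : ∀ t ∈ Set.Icc a b, HasDerivWithinAt f (f' t) (Set.Icc a b) t)
    (hcont : ContinuousOn f' (Set.Icc a b)) :
    ∀ t ∈ Set.Icc a b, |f t| ≤
      (Real.sqrt (b - a))⁻¹ * Real.sqrt (∫ s in Set.Ioo a b, f s ^ 2) +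
        Real.sqrt (b - a) * Real.sqrt (∫ s in Set.Ioo a b, f' s ^ 2) := by
  intro t ht
  have hfc : ContinuousOn f (Set.Icc a b) := fun x hx => (hderiv x hx).continuousWithinAt
  set C := ∫ s in Set.Ioo a b, |f' s| with hC
  have hf'int : IntegrableOn (fun s => |f' s|) (Set.Icc a b) volume :=
    (hcont.abs).integrableOn_compact isCompact_Icc
  -- FTC on subintervals
  have ftc : ∀ u ∈ Set.Icc a b, ∀ v ∈ Set.Icc a b, u ≤ v →
      |f v - f u| ≤ C := by
    intro u hu v hv huv
    have hsub : Set.Icc u v ⊆ Set.Icc a b := Set.Icc_subset_Icc hu.1 hv.2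
    have hint : IntervalIntegrable f' volume u v :=
      (hcont.mono hsub).intervalIntegrable_of_Icc huv
    have heq : ∫ x in u..v, f' x = f v - f u := by
      refine intervalIntegral.integral_eq_sub_of_hasDeriv_right_of_le huv
        (hfc.mono hsub) (fun x hx => ?_) hint
      have hx' : x ∈ Set.Ioo a b := ⟨lt_of_le_of_lt hu.1 hx.1, lt_of_lt_of_le hx.2 hv.2⟩
      exact ((hderiv x (Set.Ioo_subset_Icc_self hx')).hasDerivAt
        (Icc_mem_nhds hx'.1 hx'.2)).hasDerivWithinAt
    rw [← heq]
    have h1 : |∫ x in u..v, f' x| ≤ ∫ x in u..v, |f' x| :=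
      intervalIntegral.abs_integral_le_integral_abs huv
    have h2 : ∫ x in u..v, |f' x| ≤ ∫ s in Set.Icc a b, |f' s| := by
      rw [intervalIntegral.integral_of_le huv]
      refine setIntegral_mono_set hf'int ?_ ?_
      · exact ae_of_all _ fun x => abs_nonneg _
      · exact HasSubset.Subset.eventuallyLE (fun x hx =>
          ⟨le_of_lt (lt_of_le_of_lt hu.1 hx.1), le_trans hx.2 hv.2⟩)
    have h3 : ∫ s in Set.Icc a b, |f' s| = C := by
      rw [hC, integral_Icc_eq_integral_Ioo]
    linarith [h1, h2]
  have key : ∀ s ∈ Set.Icc a b, |f t| ≤ |f s| + C := by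
    intro s hs
    rcases le_total s t with h | h
    · have := ftc s hs t ht h
      calc |f t| ≤ |f s| + |f t - f s| := by
            have := abs_sub_abs_le_abs_sub (f t) (f s); linarith
        _ ≤ |f s| + C := by linarith
    · have := ftc t ht s hs h
      calc |f t| ≤ |f s| + |f s - f t| := by
            have := abs_sub_abs_le_abs_sub (f t) (f s)
            rw [abs_sub_comm] at this; linarith
        _ ≤ |f s| + C := by linarith
  -- integrate over s
  have hfint : IntegrableOn (fun s => |f s|) (Set.Ioo a b) volume :=
    ((hfc.abs).integrableOn_compact isCompact_Icc).mono_set Set.Ioo_subset_Icc_self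
  have hvol : (volume (Set.Ioo a b)).toReal = b - a := by
    rw [Real.volume_Ioo, ENNReal.toReal_ofReal (le_of_lt (sub_pos.2 hab))]
  have stepB : (b - a) * (|f t| - C) ≤ ∫ s in Set.Ioo a b, |f s| := by
    have := setIntegral_mono_on (integrableOn_const (C := |f t| - C) (by
        rw [Real.volume_Ioo]; exact ENNReal.ofReal_ne_top)) hfint measurableSet_Ioo
      (fun s hs => by
        have := key s (Set.Ioo_subset_Icc_self hs)
        show |f t| - C ≤ |f s|
        linarith)
    rwa [setIntegral_const, smul_eq_mul, measureReal_def, hvol] at this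
  have cs1 := cs_aux a b hab f hfc
  have cs2 := cs_aux a b hab f' hcont
  -- combine
  set r := Real.sqrt (b - a) with hr
  have hr0 : 0 < r := Real.sqrt_pos.2 (sub_pos.2 hab)
  have hr2 : r ^ 2 = b - a := Real.sq_sqrt (le_of_lt (sub_pos.2 hab))
  set X := Real.sqrt (∫ s in Set.Ioo a b, f s ^ 2) with hX
  set Y := Real.sqrt (∫ s in Set.Ioo a b, f' s ^ 2) with hY
  have hCY : C ≤ r * Y := cs2
  have h4 : (b - a) * |f t| ≤ r * X + (b - a) * C := by nlinarith [stepB, cs1]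
  have h5 : (b - a) * |f t| ≤ r * X + (b - a) * (r * Y) := by
    nlinarith [sub_pos.2 hab]
  rw [← hr2] at h5
  have : |f t| ≤ X / r + r * Y := by
    have h6 : |f t| ≤ (r * X + r ^ 2 * (r * Y)) / r ^ 2 := by
      rw [le_div_iff₀ (by positivity)]
      nlinarith [h5]
    refine h6.trans (le_of_eq ?_)
    field_simp
  calc |f t| ≤ X / r + r * Y := this
    _ = r⁻¹ * X + r * Y := by ring
end

section
/- For every integer q ≥ 0 there exists a constant C > 0, depending only on q, such that for all real numbers a < b and every real polynomial p of degree at most q, p(a)² + p(b)² ≤ C·(b − a)^{−1}·∫_a^b p(t)² dt. -/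
open MeasureTheory

namespace PTIaux

open Polynomial Finset

/-- evaluation of the polynomial with coefficient vector `v` -/
noncomputable def ev (n : ℕ) (v : Fin n → ℝ) (t : ℝ) : ℝ :=
  ∑ i : Fin n, v i * t ^ (i : ℕ)

lemma ev_cont (n : ℕ) (v : Fin n → ℝ) : Continuous (ev n v) := by
  unfold ev; fun_prop

lemma ev_smul (n : ℕ) (c : ℝ) (v : Fin n → ℝ) (t : ℝ) :
    ev n (c • v) t = c * ev n v t := by
  simp [ev, Finset.mul_sum, mul_assoc]

lemma moment (k : ℕ) : ∫ t in Set.Ioo (0:ℝ) 1, t ^ k = ((k:ℝ) + 1)⁻¹ := by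
  rw [← MeasureTheory.integral_Ioc_eq_integral_Ioo,
      ← intervalIntegral.integral_of_le (by norm_num : (0:ℝ) ≤ 1), integral_pow]
  simp

lemma expand (n : ℕ) (v : Fin n → ℝ) :
    ∫ t in Set.Ioo (0:ℝ) 1, (ev n v t) ^ 2 =
      ∑ i : Fin n, ∑ j : Fin n, v i * v j * ((i:ℝ) + (j:ℝ) + 1)⁻¹ := by
  have h1 : ∀ t : ℝ, (ev n v t) ^ 2 =
      ∑ i : Fin n, ∑ j : Fin n, v i * v j * t ^ ((i:ℕ) + (j:ℕ)) := by
    intro t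
    rw [sq, ev, Finset.sum_mul_sum]
    refine Finset.sum_congr rfl fun i _ => Finset.sum_congr rfl fun j _ => ?_
    ring
  simp only [h1]
  rw [MeasureTheory.integral_finset_sum]
  · refine Finset.sum_congr rfl fun i _ => ?_
    rw [MeasureTheory.integral_finset_sum]
    · refine Finset.sum_congr rfl fun j _ => ?_
      simp only [mul_assoc]
      rw [integral_const_mul, integral_const_mul, moment]
      push_cast; ring
    · intro j _
      exact ((continuous_const.mul (continuous_pow _)).integrableOn_Ioc).mono_set
        Set.Ioo_subset_Ioc_self
  · intro i _
    refine MeasureTheory.integrable_finset_sum _ fun j _ => ?_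
    exact ((continuous_const.mul (continuous_pow _)).integrableOn_Ioc).mono_set
      Set.Ioo_subset_Ioc_self

/-- the squared L² norm on coefficient vectors -/
noncomputable def f (n : ℕ) (v : Fin n → ℝ) : ℝ := ∫ t in Set.Ioo (0:ℝ) 1, (ev n v t) ^ 2

/-- the boundary values -/
noncomputable def g (n : ℕ) (v : Fin n → ℝ) : ℝ := ev n v 0 ^ 2 + ev n v 1 ^ 2

lemma f_cont (n : ℕ) : Continuous (f n) := by
  have : f n = fun v => ∑ i : Fin n, ∑ j : Fin n, v i * v j * ((i:ℝ) + (j:ℝ) + 1)⁻¹ := by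
    funext v; exact expand n v
  rw [this]; fun_prop

lemma g_cont (n : ℕ) : Continuous (g n) := by
  unfold g ev; fun_prop

lemma f_nonneg (n : ℕ) (v : Fin n → ℝ) : 0 ≤ f n v :=
  MeasureTheory.integral_nonneg fun _ => sq_nonneg _

lemma g_nonneg (n : ℕ) (v : Fin n → ℝ) : 0 ≤ g n v :=
  add_nonneg (sq_nonneg _) (sq_nonneg _)

lemma f_smul (n : ℕ) (c : ℝ) (v : Fin n → ℝ) : f n (c • v) = c ^ 2 * f n v := by
  unfold f
  simp only [ev_smul, mul_pow]
  rw [integral_const_mul]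

lemma g_smul (n : ℕ) (c : ℝ) (v : Fin n → ℝ) : g n (c • v) = c ^ 2 * g n v := by
  unfold g
  simp only [ev_smul, mul_pow]; ring

lemma f_pos (n : ℕ) (v : Fin n → ℝ) (hv : v ≠ 0) : 0 < f n v := by
  rcases lt_or_eq_of_le (f_nonneg n v) with h | h
  · exact h
  exfalso
  have hint : Integrable (fun t => (ev n v t) ^ 2) (volume.restrict (Set.Ioo (0:ℝ) 1)) :=
    (((ev_cont n v).pow 2).integrableOn_Ioc).mono_set Set.Ioo_subset_Ioc_self
  have hae : (fun t => (ev n v t) ^ 2) =ᶠ[ae (volume.restrict (Set.Ioo (0:ℝ) 1))] 0 := by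
    rw [← MeasureTheory.integral_eq_zero_iff_of_nonneg (fun _t => sq_nonneg _) hint]
    exact h.symm
  have hae2 : ∀ᵐ t : ℝ, t ∈ Set.Ioo (0:ℝ) 1 → ev n v t ^ 2 = 0 :=
    (MeasureTheory.ae_restrict_iff' measurableSet_Ioo).mp hae
  -- the polynomial with coefficients v
  set P : ℝ[X] := ∑ i : Fin n, Polynomial.C (v i) * Polynomial.X ^ (i:ℕ) with hP
  have hPeval : ∀ t, P.eval t = ev n v t := by
    intro t; simp [hP, ev, Polynomial.eval_finset_sum]
  have hPne : P ≠ 0 := by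
    intro h0
    apply hv
    funext i
    have hc : P.coeff (i:ℕ) = v i := by
      rw [hP, Polynomial.finset_sum_coeff, Finset.sum_eq_single i]
      · simp
      · intro j _ hji
        simp only [Polynomial.coeff_C_mul, Polynomial.coeff_X_pow]
        have hne : (i:ℕ) ≠ (j:ℕ) := fun hc => hji (Fin.ext hc.symm)
        simp [hne]
      · simp
    rw [h0] at hc
    simpa using hc.symm
  have hroots : Set.Finite {x | P.IsRoot x} := Polynomial.finite_setOf_isRoot hPne
  set N : Set ℝ := {t | ¬ (t ∈ Set.Ioo (0:ℝ) 1 → ev n v t ^ 2 = 0)} with hN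
  have hNnull : volume N = 0 := hae2
  have hsub : Set.Ioo (0:ℝ) 1 ⊆ {x | P.IsRoot x} ∪ N := by
    intro t ht
    by_cases hz : ev n v t ^ 2 = 0
    · left
      simp only [Set.mem_setOf_eq, Polynomial.IsRoot, hPeval]
      exact pow_eq_zero_iff (two_ne_zero) |>.mp hz
    · right
      exact fun himp => hz (himp ht)
  have : volume (Set.Ioo (0:ℝ) 1) = 0 := by
    refine measure_mono_null hsub ?_
    refine le_antisymm ?_ (zero_le)
    calc volume ({x | P.IsRoot x} ∪ N) ≤ volume {x | P.IsRoot x} + volume N :=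
          measure_union_le _ _
      _ = 0 := by rw [hroots.measure_zero, hNnull, add_zero]
  rw [Real.volume_Ioo] at this
  norm_num at this

/-- The trace inequality on the unit interval, in coefficient form. -/
lemma step1 (n : ℕ) (hn : 0 < n) :
    ∃ C : ℝ, 0 < C ∧ ∀ v : Fin n → ℝ, g n v ≤ C * f n v := by
  have : Nontrivial (Fin n → ℝ) := by
    have : NeZero n := ⟨hn.ne'⟩
    infer_instance
  obtain ⟨vm, hvmS, hvm⟩ := (isCompact_sphere (0 : Fin n → ℝ) 1).exists_isMinOn
    (NormedSpace.sphere_nonempty.mpr zero_le_one) (f_cont n).continuousOn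
  obtain ⟨vM, hvMS, hvM⟩ := (isCompact_sphere (0 : Fin n → ℝ) 1).exists_isMaxOn
    (NormedSpace.sphere_nonempty.mpr zero_le_one) (g_cont n).continuousOn
  set m := f n vm with hm
  set M := g n vM with hM
  have hvm0 : vm ≠ 0 := by
    intro h0
    have := mem_sphere_zero_iff_norm.mp hvmS
    rw [h0] at this; simp at this
  have hmpos : 0 < m := f_pos n vm hvm0
  refine ⟨(M + 1) / m, div_pos (by linarith [g_nonneg n vM]) hmpos, ?_⟩
  intro v
  by_cases hv : v = 0
  · subst hv
    have : g n 0 = 0 := by simp [g, ev]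
    rw [this]
    have : f n 0 = 0 := by simp [f, ev]
    rw [this, mul_zero]
  · set u := ‖v‖⁻¹ • v with hu
    have hvn : ‖v‖ ≠ 0 := norm_ne_zero_iff.mpr hv
    have huS : u ∈ Metric.sphere (0 : Fin n → ℝ) 1 := by
      rw [mem_sphere_zero_iff_norm, hu, norm_smul]
      simp [abs_of_nonneg (inv_nonneg.mpr (norm_nonneg v)), inv_mul_cancel₀ hvn]
    have hv_eq : v = ‖v‖ • u := by
      rw [hu, smul_smul, mul_inv_cancel₀ hvn, one_smul]
    have hgu : g n u ≤ M := hvM huS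
    have hfu : m ≤ f n u := hvm huS
    have hg : g n v = ‖v‖ ^ 2 * g n u := by
      conv_lhs => rw [hv_eq]
      rw [g_smul]
    have hf : f n v = ‖v‖ ^ 2 * f n u := by
      conv_lhs => rw [hv_eq]
      rw [f_smul]
    calc g n v = ‖v‖ ^ 2 * g n u := hg
      _ ≤ ‖v‖ ^ 2 * (M + 1) := by
          apply mul_le_mul_of_nonneg_left (by linarith) (sq_nonneg _)
      _ = (M + 1) / m * (‖v‖ ^ 2 * m) := by field_simp
      _ ≤ (M + 1) / m * f n v := by
          apply mul_le_mul_of_nonneg_left ?_ (le_of_lt (div_pos (by linarith [g_nonneg n vM]) hmpos))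
          rw [hf]
          exact mul_le_mul_of_nonneg_left hfu (sq_nonneg _)

end PTIaux

/-- Polynomial trace inequality: for every `q ≥ 0` there is `C > 0`, depending only on `q`,
such that for all `a < b` and all polynomials `p` of degree at most `q`,
`p(a)² + p(b)² ≤ C (b−a)⁻¹ ∫_a^b p(t)² dt`. -/
theorem polynomial_trace_inequality (q : ℕ) :
    ∃ C : ℝ, 0 < C ∧ ∀ a b : ℝ, a < b → ∀ p : Polynomial ℝ, p.natDegree ≤ q →
      p.eval a ^ 2 + p.eval b ^ 2 ≤
        C * (b - a)⁻¹ * ∫ t in Set.Ioo a b, p.eval t ^ 2 := by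
  obtain ⟨C, hC, h1⟩ := PTIaux.step1 (q + 1) (Nat.succ_pos q)
  refine ⟨C, hC, ?_⟩
  intro a b hab p hp
  set r : Polynomial ℝ := p.comp (Polynomial.C (b - a) * Polynomial.X + Polynomial.C a) with hr
  have hba : b - a ≠ 0 := sub_ne_zero.mpr hab.ne'
  have hrdeg : r.natDegree ≤ q := by
    calc r.natDegree ≤ p.natDegree * (Polynomial.C (b-a) * Polynomial.X + Polynomial.C a).natDegree :=
          Polynomial.natDegree_comp_le
      _ ≤ p.natDegree * 1 := Nat.mul_le_mul_left _ Polynomial.natDegree_linear_le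
      _ ≤ q := by omega
  have hreval : ∀ t : ℝ, r.eval t = p.eval ((b - a) * t + a) := by
    intro t; simp [hr, Polynomial.eval_comp]
  set v : Fin (q+1) → ℝ := fun i => r.coeff (i:ℕ) with hv
  have hev : ∀ t : ℝ, PTIaux.ev (q+1) v t = r.eval t := by
    intro t
    rw [Polynomial.eval_eq_sum_range' (Nat.lt_succ_of_le hrdeg)]
    rw [PTIaux.ev, Fin.sum_univ_eq_sum_range (fun i => r.coeff i * t ^ i)]
  have key := h1 v
  simp only [PTIaux.g, PTIaux.f] at key
  rw [hev 0, hev 1, hreval 0, hreval 1] at key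
  simp only [mul_zero, zero_add, mul_one] at key
  have heq : (∫ t in Set.Ioo (0:ℝ) 1, PTIaux.ev (q+1) v t ^ 2) =
      (b - a)⁻¹ * ∫ t in Set.Ioo a b, p.eval t ^ 2 := by
    have h2 : (∫ t in Set.Ioo (0:ℝ) 1, PTIaux.ev (q+1) v t ^ 2) =
        ∫ t in (0:ℝ)..1, (fun s => p.eval s ^ 2) ((b - a) * t + a) := by
      rw [intervalIntegral.integral_of_le (by norm_num : (0:ℝ) ≤ 1),
          MeasureTheory.integral_Ioc_eq_integral_Ioo]
      refine MeasureTheory.integral_congr_ae (Filter.Eventually.of_forall fun t => ?_)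
      simp only [hev, hreval]
    rw [h2, intervalIntegral.integral_comp_mul_add (fun s => p.eval s ^ 2) hba a]
    rw [mul_zero, zero_add, mul_one, sub_add_cancel]
    rw [smul_eq_mul, intervalIntegral.integral_of_le hab.le,
        MeasureTheory.integral_Ioc_eq_integral_Ioo]
  rw [heq, sub_add_cancel] at key
  calc p.eval a ^ 2 + p.eval b ^ 2 ≤ C * ((b-a)⁻¹ * ∫ t in Set.Ioo a b, p.eval t ^ 2) := key
    _ = C * (b-a)⁻¹ * ∫ t in Set.Ioo a b, p.eval t ^ 2 := by ring
end

section
/- There exists a constant C > 0 such that for all real numbers a < b and every continuously differentiable function f : [a, b] → ℝ, f(a)² + f(b)² ≤ C·((b − a)^{−1}·∫_a^b f(t)² dt + (b − a)·∫_a^b f'(t)² dt). -/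
open MeasureTheory

/-- Trace inequality: there is `C > 0` such that for all `a < b` and every continuously
differentiable `f : [a, b] → ℝ`,
`f(a)² + f(b)² ≤ C ((b−a)⁻¹ ∫_a^b f² + (b−a) ∫_a^b (f')²)`. -/
theorem trace_inequality :
    ∃ C : ℝ, 0 < C ∧ ∀ a b : ℝ, a < b → ∀ f f' : ℝ → ℝ,
      (∀ t ∈ Set.Icc a b, HasDerivWithinAt f (f' t) (Set.Icc a b) t) →
      ContinuousOn f' (Set.Icc a b) →
      f a ^ 2 + f b ^ 2 ≤
        C * ((b - a)⁻¹ * (∫ t in Set.Ioo a b, f t ^ 2) +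
          (b - a) * ∫ t in Set.Ioo a b, f' t ^ 2) := by
  refine ⟨4, by norm_num, ?_⟩
  intro a b hab f f' hderiv hcont
  set d : ℝ := b - a with hd_def
  have hd : 0 < d := by simp [hd_def]; linarith
  have hf : ContinuousOn f (Set.Icc a b) := fun t ht =>
    (hderiv t ht).continuousWithinAt
  -- continuity of the various integrands on Icc a b
  have hcf2 : ContinuousOn (fun t => f t ^ 2) (Set.Icc a b) := hf.pow 2
  have hcf'2 : ContinuousOn (fun t => f' t ^ 2) (Set.Icc a b) := hcont.pow 2
  have hcg : ContinuousOn (fun t => 2 * f t * f' t) (Set.Icc a b) :=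
    (continuousOn_const.mul hf).mul hcont
  have hcga : ContinuousOn (fun t => |2 * f t * f' t|) (Set.Icc a b) := hcg.abs
  -- integrability on Ioo a b
  have hint1 : IntegrableOn (fun t => f t ^ 2) (Set.Ioo a b) :=
    (hcf2.integrableOn_Icc).mono_set Set.Ioo_subset_Icc_self
  have hint2 : IntegrableOn (fun t => f' t ^ 2) (Set.Ioo a b) :=
    (hcf'2.integrableOn_Icc).mono_set Set.Ioo_subset_Icc_self
  have hintK : IntegrableOn (fun t => |2 * f t * f' t|) (Set.Ioo a b) :=
    (hcga.integrableOn_Icc).mono_set Set.Ioo_subset_Icc_self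
  set I1 : ℝ := ∫ t in Set.Ioo a b, f t ^ 2 with hI1_def
  set I2 : ℝ := ∫ t in Set.Ioo a b, f' t ^ 2 with hI2_def
  set K : ℝ := ∫ t in Set.Ioo a b, |2 * f t * f' t| with hK_def
  have hI1 : 0 ≤ I1 := setIntegral_nonneg measurableSet_Ioo (fun t _ => sq_nonneg _)
  have hI2 : 0 ≤ I2 := setIntegral_nonneg measurableSet_Ioo (fun t _ => sq_nonneg _)
  -- FTC : for t ≤ s in Icc a b
  have key : ∀ t ∈ Set.Icc a b, ∀ s ∈ Set.Icc a b, t ≤ s →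
      f s ^ 2 - f t ^ 2 = ∫ u in t..s, 2 * f u * f' u := by
    intro t ht s hs hts
    have hsub : Set.Icc t s ⊆ Set.Icc a b := Set.Icc_subset_Icc ht.1 hs.2
    have := intervalIntegral.integral_eq_sub_of_hasDeriv_right_of_le hts
      (f := fun u => f u ^ 2) (f' := fun u => 2 * f u * f' u)
      ((hcf2.mono hsub))
      (fun x hx => by
        have hx' : x ∈ Set.Ioo a b :=
          ⟨lt_of_le_of_lt ht.1 hx.1, lt_of_lt_of_le hx.2 hs.2⟩
        have hda : HasDerivAt f (f' x) x :=
          (hderiv x (Set.Ioo_subset_Icc_self hx')).hasDerivAt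
            (Icc_mem_nhds hx'.1 hx'.2)
        have := (hda.pow 2).hasDerivWithinAt (s := Set.Ioi x)
        simpa [Pi.pow_def, pow_one, mul_comm, mul_assoc, mul_left_comm] using this)
      ((hcg.mono (by rwa [Set.uIcc_of_le hts])).intervalIntegrable)
    simpa using this.symm
  -- step : for all c, t in Icc, f c ^ 2 ≤ f t ^ 2 + K
  have hstep : ∀ c ∈ Set.Icc a b, ∀ t ∈ Set.Icc a b, f c ^ 2 ≤ f t ^ 2 + K := by
    intro c hc t ht
    have bound : ∀ p ∈ Set.Icc a b, ∀ q ∈ Set.Icc a b, p ≤ q →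
        |∫ u in p..q, 2 * f u * f' u| ≤ K := by
      intro p hp q hq hpq
      have h1 : |∫ u in p..q, 2 * f u * f' u| ≤ ∫ u in p..q, |2 * f u * f' u| :=
        intervalIntegral.abs_integral_le_integral_abs hpq
      have h2 : (∫ u in p..q, |2 * f u * f' u|) =
          ∫ u in Set.Ioc p q, |2 * f u * f' u| :=
        intervalIntegral.integral_of_le hpq
      have h3 : (∫ u in Set.Ioc p q, |2 * f u * f' u|) ≤
          ∫ u in Set.Icc a b, |2 * f u * f' u| := by
        apply setIntegral_mono_set (hcga.integrableOn_Icc)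
        · exact Filter.Eventually.of_forall (fun u => abs_nonneg _)
        · exact HasSubset.Subset.eventuallyLE (Set.Ioc_subset_Icc_self.trans
            (Set.Icc_subset_Icc hp.1 hq.2))
      have h4 : (∫ u in Set.Icc a b, |2 * f u * f' u|) = K := by
        rw [hK_def, integral_Icc_eq_integral_Ioo]
      linarith
    rcases le_total t c with h | h
    · have habs : f c ^ 2 - f t ^ 2 ≤ |∫ u in t..c, 2 * f u * f' u| := by
        rw [← key t ht c hc h]; exact le_abs_self _
      linarith [bound t ht c hc h]
    · have habs : f c ^ 2 - f t ^ 2 ≤ |∫ u in c..t, 2 * f u * f' u| := by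
        calc f c ^ 2 - f t ^ 2 ≤ |f c ^ 2 - f t ^ 2| := le_abs_self _
          _ = |f t ^ 2 - f c ^ 2| := (abs_sub_comm _ _)
          _ = |∫ u in c..t, 2 * f u * f' u| := by rw [key c hc t ht h]
      linarith [bound c hc t ht h]
  -- averaging over t ∈ Ioo a b
  have havg : ∀ c ∈ Set.Icc a b, d * f c ^ 2 ≤ I1 + d * K := by
    intro c hc
    have hmono : (∫ t in Set.Ioo a b, f c ^ 2) ≤
        ∫ t in Set.Ioo a b, (f t ^ 2 + K) := by
      apply setIntegral_mono_on
      · exact integrableOn_const measure_Ioo_lt_top.ne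
      · exact hint1.add (integrableOn_const measure_Ioo_lt_top.ne)
      · exact measurableSet_Ioo
      · exact fun t ht => hstep c hc t (Set.Ioo_subset_Icc_self ht)
    have hleft : (∫ t in Set.Ioo a b, f c ^ 2) = d * f c ^ 2 := by
      rw [setIntegral_const, measureReal_def, Real.volume_Ioo, ENNReal.toReal_ofReal hd.le,
        smul_eq_mul]
    have hright : (∫ t in Set.Ioo a b, (f t ^ 2 + K)) = I1 + d * K := by
      rw [integral_add hint1 (integrableOn_const measure_Ioo_lt_top.ne),
        setIntegral_const, measureReal_def, Real.volume_Ioo, ENNReal.toReal_ofReal hd.le,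
        smul_eq_mul]
    rw [hleft] at hmono
    rw [hright] at hmono
    exact hmono
  -- Young's inequality bound on K
  have young : ∀ x y : ℝ, |2 * x * y| ≤ d⁻¹ * x ^ 2 + d * y ^ 2 := by
    intro x y
    have h : d * |2 * x * y| ≤ x ^ 2 + d ^ 2 * y ^ 2 := by
      rcases abs_cases (2 * x * y) with ⟨he, _⟩ | ⟨he, _⟩ <;> rw [he] <;>
        nlinarith [sq_nonneg (x - d * y), sq_nonneg (x + d * y)]
    calc |2 * x * y| = d⁻¹ * (d * |2 * x * y|) := by
          field_simp
      _ ≤ d⁻¹ * (x ^ 2 + d ^ 2 * y ^ 2) := by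
          apply mul_le_mul_of_nonneg_left h (inv_nonneg.mpr hd.le)
      _ = d⁻¹ * x ^ 2 + d * y ^ 2 := by
          field_simp
  have hK : K ≤ d⁻¹ * I1 + d * I2 := by
    have hmono : K ≤ ∫ t in Set.Ioo a b, (d⁻¹ * f t ^ 2 + d * f' t ^ 2) := by
      refine setIntegral_mono_on hintK ?_ measurableSet_Ioo ?_
      · exact (hint1.const_mul _).add (hint2.const_mul _)
      · exact fun t _ => young (f t) (f' t)
    have heq : (∫ t in Set.Ioo a b, (d⁻¹ * f t ^ 2 + d * f' t ^ 2)) =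
        d⁻¹ * I1 + d * I2 := by
      rw [integral_add (hint1.const_mul _) (hint2.const_mul _),
        integral_const_mul, integral_const_mul]
    rw [heq] at hmono
    exact hmono
  -- combine
  have hA := havg a ⟨le_refl a, hab.le⟩
  have hCgoal : f a ^ 2 + f b ^ 2 ≤ 4 * (d⁻¹ * I1 + d * I2) → f a ^ 2 + f b ^ 2 ≤
      4 * ((b - a)⁻¹ * (∫ t in Set.Ioo a b, f t ^ 2) +
        (b - a) * ∫ t in Set.Ioo a b, f' t ^ 2) := by
    rw [← hd_def, ← hI1_def, ← hI2_def]; exact id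
  refine hCgoal ?_
  clear_value d I1 I2 K
  have hB := havg b ⟨hab.le, le_refl b⟩
  have hdd : d * d⁻¹ = 1 := mul_inv_cancel₀ hd.ne'
  have hgoal : f a ^ 2 + f b ^ 2 ≤ 4 * (d⁻¹ * I1 + d * I2) := by
    have h1 : d * (f a ^ 2 + f b ^ 2) ≤ 2 * I1 + 2 * d * K := by linarith
    have h2 : d * K ≤ d * (d⁻¹ * I1 + d * I2) :=
      mul_le_mul_of_nonneg_left hK hd.le
    have h3 : d * (d⁻¹ * I1 + d * I2) = I1 + d * (d * I2) := by
      field_simp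
    have h4 : d * (f a ^ 2 + f b ^ 2) ≤ 4 * I1 + 2 * (d * (d * I2)) := by
      nlinarith [h1, h2, h3]
    have h5 : 0 ≤ d * (d * I2) := by positivity
    have h6 : d * (f a ^ 2 + f b ^ 2) ≤ d * (4 * (d⁻¹ * I1 + d * I2)) := by
      have : d * (4 * (d⁻¹ * I1 + d * I2)) = 4 * I1 + 4 * (d * (d * I2)) := by
        field_simp
      rw [this]; linarith
    exact le_of_mul_le_mul_left h6 hd
  exact hgoal
end

section
/- Let q ≥ 2 be an integer, let a < b be real numbers, let α ∈ ℝ, and let w : [a, b] → ℝ be continuous. Then there exists a unique real polynomial p of degree at most q such that p(a) = α, p'(b) = w(b), and ∫_a^b (p'(t) − w(t))·r(t) dt = 0 for every real polynomial r of degree at most q − 2. -/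
open MeasureTheory

open Polynomial

private lemma aux_degreeLT_natDegree_le {q : ℕ} {p : Polynomial ℝ}
    (hp : p ∈ degreeLT ℝ (q + 1)) : p.natDegree ≤ q := by
  rcases eq_or_ne p 0 with h | h
  · simp [h]
  · exact Nat.lt_succ_iff.mp ((natDegree_lt_iff_degree_lt h).mpr (mem_degreeLT.mp hp))

private lemma aux_integral_mul_poly_expand (a b : ℝ) (f : ℝ → ℝ)
    (hf : ∀ i : ℕ, IntegrableOn (fun t => f t * t ^ i) (Set.Ioo a b))
    (m : ℕ) (r : Polynomial ℝ) (hr : r.natDegree < m) :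
    ∫ t in Set.Ioo a b, f t * r.eval t
      = ∑ i ∈ Finset.range m, r.coeff i * ∫ t in Set.Ioo a b, f t * t ^ i := by
  have h : ∀ t : ℝ, f t * r.eval t = ∑ i ∈ Finset.range m, r.coeff i * (f t * t ^ i) := by
    intro t
    rw [Polynomial.eval_eq_sum_range' hr, Finset.mul_sum]
    exact Finset.sum_congr rfl fun i _ => by ring
  simp_rw [h]
  rw [integral_finset_sum _ (fun i _ => (hf i).const_mul _)]
  exact Finset.sum_congr rfl fun i _ => integral_const_mul _ _

private lemma aux_vanish (q : ℕ) (hq : 2 ≤ q) (a b : ℝ) (hab : a < b) (u : Polynomial ℝ)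
    (hdeg : u.natDegree ≤ q - 1) (hb : u.eval b = 0)
    (hint : ∀ r : Polynomial ℝ, r.natDegree ≤ q - 2 →
      ∫ t in Set.Ioo a b, u.eval t * r.eval t = 0) :
    u = 0 := by
  by_contra hu
  obtain ⟨s, hs⟩ := dvd_iff_isRoot.mpr (show u.IsRoot b from hb)
  have hs0 : s ≠ 0 := fun h => hu (by simp [hs, h])
  have hXb : (X - C b : Polynomial ℝ) ≠ 0 := X_sub_C_ne_zero b
  have hsdeg : s.natDegree ≤ q - 2 := by
    have h1 : u.natDegree = s.natDegree + 1 := by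
      rw [hs, natDegree_mul hXb hs0, natDegree_X_sub_C]; ring
    omega
  have h0 : ∫ t in Set.Ioo a b, u.eval t * s.eval t = 0 := hint s hsdeg
  set g : ℝ → ℝ := fun t => (b - t) * s.eval t ^ 2 with hgdef
  have hgc : Continuous g := by
    have : Continuous fun t : ℝ => s.eval t := s.continuous
    fun_prop
  have hgu : ∀ t : ℝ, g t = -(u.eval t * s.eval t) := by
    intro t; simp only [hgdef, hs, eval_mul, eval_sub, eval_X, eval_C]; ring
  have hzero : ∫ t in Set.Ioo a b, g t = 0 := by
    simp_rw [hgu]; rw [integral_neg, h0, neg_zero]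
  have hgint : IntegrableOn g (Set.Ioo a b) :=
    (hgc.integrableOn_Icc).mono_set Set.Ioo_subset_Icc_self
  have hnn : 0 ≤ᵐ[volume.restrict (Set.Ioo a b)] g := by
    rw [Filter.EventuallyLE, ae_restrict_iff' measurableSet_Ioo]
    filter_upwards with t ht
    exact mul_nonneg (by linarith [ht.2]) (sq_nonneg _)
  have hae : g =ᵐ[volume.restrict (Set.Ioo a b)] 0 :=
    (integral_eq_zero_iff_of_nonneg_ae hnn hgint).mp hzero
  have hopen : MeasurableSet {t : ℝ | g t ≠ 0} :=
    hgc.measurable (MeasurableSet.compl (measurableSet_singleton 0))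
  have hnull : volume ({t : ℝ | g t ≠ 0} ∩ Set.Ioo a b) = 0 := by
    have h := hae
    rw [Filter.EventuallyEq, ae_iff] at h
    simp only [Pi.zero_apply] at h
    rw [Measure.restrict_apply hopen] at h
    simpa using h
  have hsub : Set.Ioo a b \ {x : ℝ | s.IsRoot x} ⊆ {t : ℝ | g t ≠ 0} ∩ Set.Ioo a b := by
    rintro t ⟨ht, hroot⟩
    refine ⟨?_, ht⟩
    have h1 : (0:ℝ) < b - t := by linarith [ht.2]
    have hne : s.eval t ≠ 0 := fun h => hroot h
    have h2 : (0:ℝ) < s.eval t ^ 2 := by positivity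
    exact ne_of_gt (mul_pos h1 h2)
  have hpos : volume (Set.Ioo a b \ {x : ℝ | s.IsRoot x}) = volume (Set.Ioo a b) :=
    measure_diff_null ((finite_setOf_isRoot hs0).measure_zero volume)
  have : volume (Set.Ioo a b) = 0 := by
    have := measure_mono (μ := volume) hsub
    rw [hpos, hnull] at this
    exact le_antisymm this zero_le
  rw [Real.volume_Ioo, ENNReal.ofReal_eq_zero] at this
  linarith

/-- Existence and uniqueness of the projection `𝒫_τ`: for `q ≥ 2`, `a < b`, `α ∈ ℝ`, and
continuous `w : [a, b] → ℝ`, there is a unique polynomial `p` of degree at most `q` with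
`p(a) = α`, `p'(b) = w(b)`, and `∫_a^b (p'(t) − w(t)) r(t) dt = 0` for all polynomials `r`
of degree at most `q − 2`. -/
theorem projection_Pt_exists_unique (q : ℕ) (hq : 2 ≤ q) (a b : ℝ) (hab : a < b)
    (α : ℝ) (w : ℝ → ℝ) (hw : ContinuousOn w (Set.Icc a b)) :
    ∃! p : Polynomial ℝ,
      p.natDegree ≤ q ∧
      p.eval a = α ∧
      (Polynomial.derivative p).eval b = w b ∧
      ∀ r : Polynomial ℝ, r.natDegree ≤ q - 2 →
        ∫ t in Set.Ioo a b, ((Polynomial.derivative p).eval t - w t) * r.eval t = 0 := by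
  classical
  -- integrability facts
  have hPint : ∀ P : Polynomial ℝ, IntegrableOn (fun t => P.eval t) (Set.Ioo a b) := fun P =>
    (P.continuous.integrableOn_Icc).mono_set Set.Ioo_subset_Icc_self
  have hPP : ∀ P Q : Polynomial ℝ, IntegrableOn (fun t => P.eval t * Q.eval t) (Set.Ioo a b) := by
    intro P Q; simpa [eval_mul] using hPint (P * Q)
  have hPm : ∀ (P : Polynomial ℝ) (i : ℕ),
      IntegrableOn (fun t => P.eval t * t ^ i) (Set.Ioo a b) := by
    intro P i
    have h := hPP P (X ^ i)
    simp only [eval_pow, eval_X] at h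
    exact h
  have hwP : ∀ P : Polynomial ℝ, IntegrableOn (fun t => w t * P.eval t) (Set.Ioo a b) :=
    fun P => ((hw.mul P.continuous.continuousOn).integrableOn_Icc).mono_set
      Set.Ioo_subset_Icc_self
  have hwm : ∀ i : ℕ, IntegrableOn (fun t => w t * t ^ i) (Set.Ioo a b) := by
    intro i
    have h := hwP (X ^ i)
    simp only [eval_pow, eval_X] at h
    exact h
  have hsubw : ∀ (P r : Polynomial ℝ),
      IntegrableOn (fun t => (P.eval t - w t) * r.eval t) (Set.Ioo a b) := by
    intro P r
    have h : (fun t => (P.eval t - w t) * r.eval t)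
        = fun t => P.eval t * r.eval t - w t * r.eval t := by funext t; ring
    rw [h]; exact (hPP P r).sub (hwP r)
  set n := q - 1 with hn
  -- the linear map
  let T : degreeLT ℝ (q + 1) →ₗ[ℝ] ℝ × ℝ × (Fin n → ℝ) :=
    { toFun := fun p => (eval a p.1, eval b (derivative p.1),
        fun i => ∫ t in Set.Ioo a b, (derivative p.1).eval t * t ^ (i : ℕ)),
      map_add' := by
        rintro ⟨p, hp⟩ ⟨r, hr⟩
        refine Prod.ext (by simp) (Prod.ext (by simp) ?_)
        funext i
        show (∫ t in Set.Ioo a b, (derivative (p + r)).eval t * t ^ (i : ℕ))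
            = (∫ t in Set.Ioo a b, (derivative p).eval t * t ^ (i : ℕ))
              + ∫ t in Set.Ioo a b, (derivative r).eval t * t ^ (i : ℕ)
        rw [← integral_add (hPm _ _) (hPm _ _)]
        congr 1; funext t
        simp [derivative_add, add_mul]
      map_smul' := by
        rintro c ⟨p, hp⟩
        refine Prod.ext (by simp) (Prod.ext (by simp) ?_)
        funext i
        show (∫ t in Set.Ioo a b, (derivative (c • p)).eval t * t ^ (i : ℕ))
            = c * ∫ t in Set.Ioo a b, (derivative p).eval t * t ^ (i : ℕ)
        rw [← integral_const_mul]
        congr 1; funext t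
        simp [derivative_smul]; ring }
  haveI : Module.Finite ℝ (degreeLT ℝ (q + 1)) :=
    Module.Finite.equiv (degreeLTEquiv ℝ (q + 1)).symm
  have hdim : Module.finrank ℝ (degreeLT ℝ (q + 1))
      = Module.finrank ℝ (ℝ × ℝ × (Fin n → ℝ)) := by
    rw [(degreeLTEquiv ℝ (q + 1)).finrank_eq]
    simp only [Module.finrank_fin_fun, Module.finrank_prod, Module.finrank_self]
    omega
  -- injectivity
  have hinj : Function.Injective T := by
    refine (injective_iff_map_eq_zero T).mpr ?_
    rintro ⟨p, hp⟩ hTp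
    simp only [T, LinearMap.coe_mk, AddHom.coe_mk, Prod.ext_iff, funext_iff,
      Prod.fst_zero, Prod.snd_zero, Pi.zero_apply] at hTp
    obtain ⟨h1, h2, h3⟩ := hTp
    have hdeg : p.natDegree ≤ q := aux_degreeLT_natDegree_le hp
    have hder : derivative p = 0 := by
      refine aux_vanish q hq a b hab _
        (le_trans (natDegree_derivative_le p) (Nat.sub_le_sub_right hdeg 1)) h2 ?_
      intro r hr
      rw [aux_integral_mul_poly_expand a b _ (hPm (derivative p)) n r (by omega)]
      refine Finset.sum_eq_zero fun i hi => ?_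
      rw [h3 ⟨i, Finset.mem_range.mp hi⟩, mul_zero]
    have hC : p = C (p.coeff 0) := eq_C_of_derivative_eq_zero hder
    have : p = 0 := by
      rw [hC] at h1 ⊢
      rw [eval_C] at h1
      rw [h1, map_zero]
    exact Subtype.ext this
  have hsurj : Function.Surjective T :=
    (LinearMap.injective_iff_surjective_of_finrank_eq_finrank hdim).mp hinj
  obtain ⟨⟨p, hp⟩, hTp⟩ := hsurj (α, w b, fun i => ∫ t in Set.Ioo a b, w t * t ^ (i : ℕ))
  simp only [T, LinearMap.coe_mk, AddHom.coe_mk, Prod.ext_iff, funext_iff] at hTp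
  obtain ⟨h1, h2, h3⟩ := hTp
  -- orthogonality for p
  have horth : ∀ r : Polynomial ℝ, r.natDegree ≤ q - 2 →
      ∫ t in Set.Ioo a b, ((derivative p).eval t - w t) * r.eval t = 0 := by
    intro r hr
    have hrn : r.natDegree < n := by omega
    have e1 : ∀ t : ℝ, ((derivative p).eval t - w t) * r.eval t
        = (derivative p).eval t * r.eval t - w t * r.eval t := fun t => by ring
    simp_rw [e1]
    rw [integral_sub (hPP _ r) (hwP r),
      aux_integral_mul_poly_expand a b _ (hPm (derivative p)) n r hrn,
      aux_integral_mul_poly_expand a b w hwm n r hrn, ← Finset.sum_sub_distrib]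
    refine Finset.sum_eq_zero fun i hi => ?_
    rw [h3 ⟨i, Finset.mem_range.mp hi⟩]
    ring
  refine ⟨p, ⟨aux_degreeLT_natDegree_le hp, h1, h2, horth⟩, ?_⟩
  rintro p₂ ⟨hd₂, ha₂, hb₂, ho₂⟩
  have hder0 : derivative (p₂ - p) = 0 := by
    refine aux_vanish q hq a b hab _ ?_ ?_ ?_
    · exact le_trans (natDegree_derivative_le _)
        (Nat.sub_le_sub_right ((natDegree_sub_le _ _).trans
          (max_le hd₂ (aux_degreeLT_natDegree_le hp))) 1)
    · rw [derivative_sub, eval_sub, hb₂, h2, sub_self]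
    · intro r hr
      have e : ∀ t : ℝ, (derivative (p₂ - p)).eval t * r.eval t
          = ((derivative p₂).eval t - w t) * r.eval t
            - ((derivative p).eval t - w t) * r.eval t := by
        intro t; rw [derivative_sub, eval_sub]; ring
      simp_rw [e]
      rw [integral_sub (hsubw _ r) (hsubw _ r), ho₂ r hr, horth r hr, sub_zero]
  have hC : p₂ - p = C ((p₂ - p).coeff 0) := eq_C_of_derivative_eq_zero hder0
  have h0 : eval a (p₂ - p) = 0 := by rw [eval_sub, ha₂, h1, sub_self]
  rw [hC, eval_C] at h0
  have : p₂ - p = 0 := by rw [hC, h0, map_zero]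
  exact sub_eq_zero.mp this
end
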